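/- arXiv:1503.08931 — 3 statements merged into one kernel-verified Lean document; each statement's English description precedes it below -/
import Mathlib

section
/- Let k ≥ 1 and p ≥ 0 be integers, and let n_0, n_1, …, n_k be nonnegative integers with n_0 ≥ 2 and n_1 + ⋯ + n_k ≥ 1. Let α be a nonzero complex polynomial of degree p, and let f be a nonconstant complex polynomial each of whose roots has multiplicity at least k + p. Then the polynomial f^{n_0}·(f')^{n_1}·⋯·(f^{(k)})^{n_k} − α (where f^{(j)} denotes the j-th formal derivative of the polynomial f) has at least two distinct roots in ℂ. -/
open Polynomial

private lemma aux_iter_deriv (f : Polynomial ℂ) (hf : f ≠ 0) (j : ℕ) (hj : j ≤ f.natDegree) :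
    Polynomial.derivative^[j] f ≠ 0 ∧
      (Polynomial.derivative^[j] f).natDegree = f.natDegree - j := by
  induction j with
  | zero => simpa using hf
  | succ j ih =>
    obtain ⟨h1, h2⟩ := ih (le_of_lt (Nat.lt_of_succ_le hj))
    have hpos : 0 < (Polynomial.derivative^[j] f).natDegree := by omega
    have hdeg := Polynomial.degree_derivative_eq _ hpos
    rw [Function.iterate_succ_apply']
    constructor
    · intro h0
      rw [h0, Polynomial.degree_zero] at hdeg
      exact (by simp at hdeg)
    · have := Polynomial.natDegree_eq_of_degree_eq_some hdeg
      omega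

/-- **Case I (polynomial case) of Lemma 2.1.**
Let `k ≥ 1` and `p ≥ 0` be integers, and `n 0, …, n k` nonnegative integers with `n 0 ≥ 2`
and `n 1 + ⋯ + n k ≥ 1`.  Let `α` be a nonzero complex polynomial of degree `p`, and `f` a
nonconstant complex polynomial each of whose roots has multiplicity at least `k + p`.  Then
`f ^ (n 0) * (f') ^ (n 1) * ⋯ * (f⁽ᵏ⁾) ^ (n k) - α` has at least two distinct roots in `ℂ`. -/
theorem differential_monomial_sub_poly_two_roots_of_polynomial
    (k p : ℕ) (hk : 1 ≤ k) (n : ℕ → ℕ) (hn0 : 2 ≤ n 0)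
    (hn : 1 ≤ ∑ j ∈ Finset.Icc 1 k, n j)
    (α : Polynomial ℂ) (hα : α ≠ 0) (hαdeg : α.natDegree = p)
    (f : Polynomial ℂ) (hf : 0 < f.natDegree)
    (hroots : ∀ z : ℂ, f.IsRoot z → k + p ≤ f.rootMultiplicity z) :
    ∃ z₁ z₂ : ℂ, z₁ ≠ z₂ ∧
      ((∏ j ∈ Finset.range (k + 1), (Polynomial.derivative^[j] f) ^ n j) - α).IsRoot z₁ ∧
      ((∏ j ∈ Finset.range (k + 1), (Polynomial.derivative^[j] f) ^ n j) - α).IsRoot z₂ := by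
  classical
  set M : Polynomial ℂ := ∏ j ∈ Finset.range (k + 1), (Polynomial.derivative^[j] f) ^ n j with hMdef
  set g : Polynomial ℂ := M - α with hgdef
  by_contra hcon
  have huniq : ∀ z₁ z₂ : ℂ, g.IsRoot z₁ → g.IsRoot z₂ → z₁ = z₂ := by
    intro z₁ z₂ h1 h2
    by_contra hne
    exact hcon ⟨z₁, z₂, hne, h1, h2⟩
  have hf0 : f ≠ 0 := fun h => by simp [h] at hf
  -- f has a root z₁
  obtain ⟨z₁, hz₁⟩ := IsAlgClosed.exists_root f
    (by rw [Polynomial.degree_eq_natDegree hf0]; exact_mod_cast (by omega : f.natDegree ≠ 0))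
  -- degree of f is at least k + p
  have hmz₁ : k + p ≤ f.rootMultiplicity z₁ := hroots z₁ hz₁
  have hd : k + p ≤ f.natDegree := by
    have h1 : (X - C z₁) ^ f.rootMultiplicity z₁ ∣ f := f.pow_rootMultiplicity_dvd z₁
    have h2 := Polynomial.natDegree_le_of_dvd h1 hf0
    rw [Polynomial.natDegree_pow, Polynomial.natDegree_X_sub_C, mul_one] at h2
    omega
  -- iterated derivatives are nonzero with the right degree
  have haux : ∀ j ∈ Finset.range (k + 1), Polynomial.derivative^[j] f ≠ 0 ∧
      (Polynomial.derivative^[j] f).natDegree = f.natDegree - j := by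
    intro j hj
    exact aux_iter_deriv f hf0 j (by have := Finset.mem_range.mp hj; omega)
  have hMne : M ≠ 0 := by
    rw [hMdef]
    rw [Finset.prod_ne_zero_iff]
    intro j hj
    exact pow_ne_zero _ (haux j hj).1
  have hMdeg : M.natDegree = ∑ j ∈ Finset.range (k + 1), n j * (f.natDegree - j) := by
    rw [hMdef, Polynomial.natDegree_prod _ _ (fun j hj => pow_ne_zero _ (haux j hj).1)]
    exact Finset.sum_congr rfl fun j hj => by
      rw [Polynomial.natDegree_pow, (haux j hj).2]
  -- some j₀ ∈ [1, k] with n j₀ ≥ 1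
  obtain ⟨j₀, hj₀mem, hj₀⟩ := Finset.exists_ne_zero_of_sum_ne_zero (by omega :
    ∑ j ∈ Finset.Icc 1 k, n j ≠ 0)
  obtain ⟨hj₀1, hj₀k⟩ := Finset.mem_Icc.mp hj₀mem
  -- natDegree M ≥ p + 2
  have hMp2 : p + 2 ≤ M.natDegree := by
    have hsub : ({0, j₀} : Finset ℕ) ⊆ Finset.range (k + 1) := by
      intro x hx
      simp only [Finset.mem_insert, Finset.mem_singleton] at hx
      rcases hx with rfl | rfl <;> simp [Finset.mem_range] <;> omega
    have hle : ∑ j ∈ ({0, j₀} : Finset ℕ), n j * (f.natDegree - j) ≤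
        ∑ j ∈ Finset.range (k + 1), n j * (f.natDegree - j) :=
      Finset.sum_le_sum_of_subset hsub
    rw [Finset.sum_pair (by omega : (0 : ℕ) ≠ j₀)] at hle
    have h1 : 2 * f.natDegree ≤ n 0 * (f.natDegree - 0) := by
      rw [Nat.sub_zero]; exact Nat.mul_le_mul_right _ hn0
    have h2 : 1 * (f.natDegree - j₀) ≤ n j₀ * (f.natDegree - j₀) :=
      Nat.mul_le_mul_right _ (by omega)
    rw [hMdeg]
    omega
  -- g is nonzero of the same degree as M
  have hαM : α.degree < M.degree := by
    rw [Polynomial.degree_eq_natDegree hα, Polynomial.degree_eq_natDegree hMne]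
    exact_mod_cast (by omega : α.natDegree < M.natDegree)
  have hgdeg : g.degree = M.degree := Polynomial.degree_sub_eq_left_of_degree_lt hαM
  have hg0 : g ≠ 0 := by
    intro h
    rw [h, Polynomial.degree_zero, Polynomial.degree_eq_natDegree hMne] at hgdeg
    exact (by simp at hgdeg)
  have hgnat : g.natDegree = M.natDegree :=
    Polynomial.natDegree_eq_of_degree_eq_some
      (hgdeg.trans (Polynomial.degree_eq_natDegree hMne))
  -- g has a root z₀
  obtain ⟨z₀, hz₀⟩ := IsAlgClosed.exists_root g
    (by rw [Polynomial.degree_eq_natDegree hg0]; exact_mod_cast (by omega : g.natDegree ≠ 0))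
  -- g = (X - C z₀) ^ m * (C c)
  set m₀ := g.rootMultiplicity z₀ with hm₀def
  set q : Polynomial ℂ := g /ₘ (X - C z₀) ^ m₀ with hqdef
  have hfac : (X - C z₀) ^ m₀ * q = g := g.pow_mul_divByMonic_rootMultiplicity_eq z₀
  have heval : q.eval z₀ ≠ 0 := Polynomial.eval_divByMonic_pow_rootMultiplicity_ne_zero z₀ hg0
  have hq0 : q ≠ 0 := fun h => heval (by simp [h])
  have hqroot : ∀ z : ℂ, ¬ q.IsRoot z := by
    intro z hz
    have hgz : g.IsRoot z := by
      rw [← hfac]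
      simp [Polynomial.IsRoot, Polynomial.eval_mul, hz.eq_zero]
    exact heval ((huniq z z₀ hgz hz₀) ▸ hz)
  have hqdeg : q.degree = 0 := by
    by_contra h
    obtain ⟨z, hz⟩ := IsAlgClosed.exists_root q h
    exact hqroot z hz
  set c := q.coeff 0 with hcdef
  have hqC : q = C c := Polynomial.eq_C_of_degree_le_zero (le_of_eq hqdeg)
  have hc0 : c ≠ 0 := fun h => hq0 (by rw [hqC, h, map_zero])
  -- m₀ = natDegree g
  have hm₀ : m₀ = M.natDegree := by
    have := congrArg Polynomial.natDegree hfac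
    rw [Polynomial.natDegree_mul (pow_ne_zero _ (Polynomial.X_sub_C_ne_zero z₀)) hq0,
      Polynomial.natDegree_pow, Polynomial.natDegree_X_sub_C, mul_one, hqC,
      Polynomial.natDegree_C] at this
    omega
  -- the (p+1)-st derivative of g equals that of M
  have hDM : Polynomial.derivative^[p + 1] g = Polynomial.derivative^[p + 1] M := by
    rw [hgdef, Polynomial.iterate_derivative_sub,
      Polynomial.iterate_derivative_eq_zero (by omega : α.natDegree < p + 1), sub_zero]
  -- explicit form of that derivative
  have hgC : g = C c * (X - C z₀) ^ m₀ := by rw [← hfac, hqC, mul_comm]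
  have hDg : Polynomial.derivative^[p + 1] g =
      C c * (m₀.descFactorial (p + 1) • (X - C z₀) ^ (m₀ - (p + 1))) := by
    rw [hgC, Polynomial.iterate_derivative_C_mul, Polynomial.iterate_derivative_X_sub_pow]
  -- (X - C z₁) ^ (p + 2) divides M
  have hdvdM : (X - C z₁) ^ (2 * (k + p)) ∣ M := by
    have h1 : (X - C z₁) ^ (k + p) ∣ f :=
      dvd_trans (pow_dvd_pow _ hmz₁) (f.pow_rootMultiplicity_dvd z₁)
    have h2 : ((X - C z₁) ^ (k + p)) ^ 2 ∣ f ^ 2 := pow_dvd_pow_of_dvd h1 2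
    rw [← pow_mul, mul_comm (k + p) 2] at h2
    have h3 : f ^ 2 ∣ f ^ n 0 := pow_dvd_pow f hn0
    have h4 : f ^ n 0 ∣ M := by
      have := Finset.dvd_prod_of_mem
        (fun j => (Polynomial.derivative^[j] f) ^ n j)
        (Finset.mem_range.mpr (by omega : 0 < k + 1))
      simpa using this
    exact h2.trans (h3.trans h4)
  have hmultM : p + 2 ≤ M.rootMultiplicity z₁ := by
    rw [Polynomial.le_rootMultiplicity_iff hMne]
    exact dvd_trans (pow_dvd_pow _ (by omega : p + 2 ≤ 2 * (k + p))) hdvdM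
  -- z₁ is a root of the (p+1)-st derivative of M, hence z₁ = z₀
  have hroot1 : (Polynomial.derivative^[p + 1] M).IsRoot z₁ :=
    Polynomial.isRoot_iterate_derivative_of_lt_rootMultiplicity (by omega)
  rw [← hDM, hDg] at hroot1
  have hz₁z₀ : z₁ = z₀ := by
    have := hroot1
    simp only [Polynomial.IsRoot, Polynomial.eval_mul, Polynomial.eval_C,
      Polynomial.eval_smul, Polynomial.eval_pow, Polynomial.eval_sub, Polynomial.eval_X,
      smul_eq_mul, nsmul_eq_mul, Polynomial.eval_natCast] at this
    have hdf : (m₀.descFactorial (p + 1) : ℂ) ≠ 0 := by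
      rw [Nat.cast_ne_zero]
      intro h
      have := Nat.descFactorial_eq_zero_iff_lt.mp h
      omega
    have h1 : ((m₀ - p : ℕ) : ℂ) ≠ 0 := by rw [Nat.cast_ne_zero]; omega
    have h2 : ((m₀.descFactorial p : ℕ) : ℂ) ≠ 0 := by
      rw [Nat.cast_ne_zero]
      intro h
      have := Nat.descFactorial_eq_zero_iff_lt.mp h
      omega
    have hpow : (z₁ - z₀) ^ (m₀ - (p + 1)) = 0 := by
      simp only [mul_eq_zero] at this
      rcases this with h | h | h
      · exact absurd h hc0
      · exact absurd h hdf
      · exact h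
    have : z₁ - z₀ = 0 := by
      have hex : m₀ - (p + 1) ≠ 0 := by omega
      exact pow_eq_zero_iff hex |>.mp hpow
    exact sub_eq_zero.mp this
  -- final contradiction: (X - C z₀)^(p+1) divides α
  have hdvdα : (X - C z₀) ^ (p + 1) ∣ α := by
    have h1 : (X - C z₀) ^ (p + 1) ∣ M :=
      dvd_trans (pow_dvd_pow _ (by omega : p + 1 ≤ 2 * (k + p))) (hz₁z₀ ▸ hdvdM)
    have h2 : (X - C z₀) ^ (p + 1) ∣ g := by
      rw [hgC]
      exact Dvd.dvd.mul_left (pow_dvd_pow _ (by omega : p + 1 ≤ m₀)) (C c)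
    have : M - g = α := by rw [hgdef]; ring
    exact this ▸ dvd_sub h1 h2
  have := Polynomial.natDegree_le_of_dvd hdvdα hα
  rw [Polynomial.natDegree_pow, Polynomial.natDegree_X_sub_C, mul_one] at this
  omega
end

section
/- Let k ≥ 1 and p ≥ 0 be integers, and let n_0, n_1, …, n_k be nonnegative integers with n_0 ≥ 2 and n_1 + ⋯ + n_k ≥ 1. Let α be a nonzero complex polynomial of degree p. Let P and Q be coprime complex polynomials with Q ≠ 0 such that the function f(z) = P(z)/Q(z) is nonconstant, every root of P has multiplicity at least k + p, and every root of Q has multiplicity at least p + 1. Then there exist two distinct points z_1 ≠ z_2 in ℂ with Q(z_1) ≠ 0 and Q(z_2) ≠ 0 such that ∏_{j=0}^{k} (f^{(j)}(z_i))^{n_j} = α(z_i) for i = 1, 2, where f^{(j)} denotes the j-th iterated complex derivative of the function f (and f^{(0)} = f). -/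
open Polynomial

/-- Numerators of successive derivatives of `P/Q`. -/
noncomputable def lem21S (P Q : Polynomial ℂ) : ℕ → Polynomial ℂ
  | 0 => P
  | (j+1) => derivative (lem21S P Q j) * Q - C ((j : ℂ) + 1) * lem21S P Q j * derivative Q

theorem lem21S_eval (P Q : Polynomial ℂ) (j : ℕ) {z : ℂ} (hz : Q.eval z ≠ 0) :
    iteratedDeriv j (fun w => P.eval w / Q.eval w) z
      = (lem21S P Q j).eval z / (Q.eval z) ^ (j + 1) := by
  induction j generalizing z with
  | zero => simp [lem21S]
  | succ j ih =>
    rw [iteratedDeriv_succ]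
    have hopen : IsOpen {w : ℂ | Q.eval w ≠ 0} :=
      isOpen_compl_singleton.preimage Q.continuous
    have hev : iteratedDeriv j (fun w => P.eval w / Q.eval w)
        =ᶠ[nhds z] fun w => (lem21S P Q j).eval w / (Q.eval w) ^ (j + 1) := by
      filter_upwards [hopen.mem_nhds hz] with w hw using ih hw
    rw [hev.deriv_eq]
    have h1 : HasDerivAt (fun w => (lem21S P Q j).eval w)
        ((derivative (lem21S P Q j)).eval z) z := by
      simpa using (lem21S P Q j).hasDerivAt z
    have h2 : HasDerivAt (fun w => (Q.eval w) ^ (j + 1))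
        (((j : ℂ) + 1) * (Q.eval z) ^ j * (derivative Q).eval z) z := by
      have := HasDerivAt.fun_pow (by simpa using Q.hasDerivAt z) (j+1)
      simpa using this
    have h3 : HasDerivAt (fun w => (lem21S P Q j).eval w / (Q.eval w) ^ (j + 1)) _ z :=
      (h1.div h2 (pow_ne_zero _ hz))
    rw [h3.deriv, lem21S]
    have hzz : (Q.eval z) ^ (j+1) ≠ 0 := pow_ne_zero _ hz
    field_simp
    simp only [eval_sub, eval_mul, eval_C]
    ring

/-- derivative of `(X-x)^o * u`, multiplied by `(X-x)` to avoid `o-1`. -/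
theorem lem21_der (x : ℂ) (o : ℕ) (u : Polynomial ℂ) :
    derivative ((X - C x) ^ o * u) * (X - C x)
      = C (o : ℂ) * ((X - C x) ^ o * u) + (X - C x) ^ (o + 1) * derivative u := by
  rw [derivative_mul, derivative_pow, derivative_X_sub_C]
  cases o with
  | zero => simp; ring
  | succ o =>
    simp only [Nat.add_sub_cancel, mul_one]
    rw [pow_succ]
    push_cast
    ring

/-- Key computation: behavior of the recursion at a factored point. -/
theorem lem21_step (x : ℂ) (o t : ℕ) (u v : Polynomial ℂ) (c : ℂ) :
    (derivative ((X - C x) ^ o * u) * ((X - C x) ^ t * v)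
      - C c * ((X - C x) ^ o * u) * derivative ((X - C x) ^ t * v)) * (X - C x)
    = (X - C x) ^ (o + t) *
      ((C (o : ℂ) - C c * C (t : ℂ)) * u * v
        + (X - C x) * (derivative u * v - C c * u * derivative v)) := by
  have h1 := lem21_der x o u
  have h2 := lem21_der x t v
  calc (derivative ((X - C x) ^ o * u) * ((X - C x) ^ t * v)
      - C c * ((X - C x) ^ o * u) * derivative ((X - C x) ^ t * v)) * (X - C x)
      = (derivative ((X - C x) ^ o * u) * (X - C x)) * ((X - C x) ^ t * v)
        - C c * ((X - C x) ^ o * u) * (derivative ((X - C x) ^ t * v) * (X - C x)) := by ring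
    _ = _ := by
        rw [h1, h2]
        rw [pow_add, pow_succ, pow_succ]
        ring

theorem lem21_cancel (S w : Polynomial ℂ) (x : ℂ) (e : ℕ)
    (h : S * (X - C x) = (X - C x) ^ (e + 1) * w) : S = (X - C x) ^ e * w := by
  apply mul_right_cancel₀ (X_sub_C_ne_zero x)
  rw [h, pow_succ]; ring

theorem lem21_factor (p : Polynomial ℂ) (hp : p ≠ 0) (x : ℂ) :
    ∃ u, p = (X - C x) ^ (p.rootMultiplicity x) * u ∧ u.eval x ≠ 0 := by
  set m := p.rootMultiplicity x with hm
  obtain ⟨u, hu⟩ := pow_rootMultiplicity_dvd p x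
  refine ⟨u, hu, fun h0 => ?_⟩
  obtain ⟨w, hw⟩ := dvd_iff_isRoot.mpr h0
  have hdvd : (X - C x) ^ (m + 1) ∣ p := by
    refine ⟨w, ?_⟩
    rw [hu, hw, pow_succ]; ring
  exact absurd ((le_rootMultiplicity_iff hp).mpr hdvd) (by omega)

/-- Exact order of `lem21S P Q j` at a pole `b` of `P/Q`. -/
theorem lem21_pole (P Q : Polynomial ℂ) (b : ℂ) (q : ℕ) (hq : 1 ≤ q) (v : Polynomial ℂ)
    (hQ : Q = (X - C b) ^ q * v) (hvb : v.eval b ≠ 0) (hPb : P.eval b ≠ 0) (j : ℕ) :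
    ∃ u, lem21S P Q j = (X - C b) ^ (j * (q - 1)) * u ∧ u.eval b ≠ 0 := by
  induction j with
  | zero => exact ⟨P, by simp [lem21S], hPb⟩
  | succ j ih =>
    obtain ⟨u, hu, hub⟩ := ih
    set w := (C ((j * (q-1) : ℕ) : ℂ) - C ((j:ℂ)+1) * C (q : ℂ)) * u * v
        + (X - C b) * (derivative u * v - C ((j:ℂ)+1) * u * derivative v) with hw
    have key : lem21S P Q (j+1) * (X - C b) = (X - C b) ^ ((j+1) * (q-1) + 1) * w := by
      have hstep := lem21_step b (j * (q-1)) q u v ((j:ℂ)+1)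
      rw [← hu, ← hQ] at hstep
      show (derivative (lem21S P Q j) * Q - C ((j:ℂ)+1) * lem21S P Q j * derivative Q)
          * (X - C b) = _
      rw [hstep, ← hw]
      congr 2
      zify [hq]
      ring
    refine ⟨w, lem21_cancel _ _ _ _ key, ?_⟩
    have hcast : ((j * (q-1) : ℕ) : ℂ) - ((j:ℂ)+1) * (q:ℂ) = -((j:ℂ) + (q:ℂ)) := by
      have h2 : ((j * (q-1) : ℕ) : ℂ) = (j : ℂ) * ((q:ℂ) - 1) := by
        push_cast [Nat.cast_sub hq]; ring
      rw [h2]; ring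
    have hne : ((j:ℂ) + (q:ℂ)) ≠ 0 := by
      have h3 : ((j + q : ℕ) : ℂ) ≠ 0 := Nat.cast_ne_zero.mpr (by omega)
      push_cast at h3; exact h3
    simp only [hw, eval_add, eval_mul, eval_sub, eval_C, eval_X, eval_pow, sub_self,
      zero_mul, mul_zero, add_zero]
    rw [hcast]
    exact mul_ne_zero (mul_ne_zero (neg_ne_zero.mpr hne) hub) hvb

/-- Lower bound for order of `lem21S P Q j` at a zero `a` of `P/Q`. -/
theorem lem21_zero (P Q : Polynomial ℂ) (a : ℂ) (m : ℕ)
    (hP : (X - C a) ^ m ∣ P) (j : ℕ) (hj : j ≤ m) :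
    (X - C a) ^ (m - j) ∣ lem21S P Q j := by
  induction j with
  | zero => simpa [lem21S] using hP
  | succ j ih =>
    obtain ⟨u, hu⟩ := ih (by omega)
    have hstep := lem21_step a (m - j) 0 u Q ((j:ℂ)+1)
    rw [pow_zero, one_mul, ← hu] at hstep
    have key : lem21S P Q (j+1) * (X - C a) = (X - C a) ^ ((m - (j+1)) + 1) *
        ((C ((m - j : ℕ) : ℂ) - C ((j:ℂ)+1) * C ((0:ℕ) : ℂ)) * u * Q
          + (X - C a) * (derivative u * Q - C ((j:ℂ)+1) * u * derivative Q)) := by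
      show (derivative (lem21S P Q j) * Q - C ((j:ℂ)+1) * lem21S P Q j * derivative Q)
          * (X - C a) = _
      rw [hstep]
      congr 2
      omega
    exact ⟨_, lem21_cancel _ _ _ _ key⟩

theorem lem21_deg (P Q : Polynomial ℂ) (j : ℕ) :
    natDegree (lem21S P Q j) + j ≤ natDegree P + j * natDegree Q ∨ lem21S P Q j = 0 := by
  induction j with
  | zero => left; simp [lem21S]
  | succ j ih =>
    rcases ih with ih | ih
    swap
    · right; show derivative (lem21S P Q j) * Q - _ * lem21S P Q j * _ = 0
      rw [ih]; simp
    set Sj := lem21S P Q j with hSj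
    have hshow : lem21S P Q (j+1)
        = derivative Sj * Q - C ((j:ℂ)+1) * Sj * derivative Q := rfl
    by_cases hS' : derivative Sj = 0
    · by_cases hQ' : derivative Q = 0
      · right; rw [hshow, hS', hQ']; ring
      · left
        have ht : 1 ≤ natDegree Q := by
          rcases Nat.eq_zero_or_pos (natDegree Q) with h | h
          · exact absurd (by rw [eq_C_of_natDegree_eq_zero h]; simp) hQ'
          · exact h
        have e4 : natDegree (C ((j:ℂ)+1) * Sj * derivative Q)
            ≤ natDegree Sj + natDegree (derivative Q) :=
          le_trans natDegree_mul_le (by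
            have := natDegree_mul_le (p := C ((j:ℂ)+1)) (q := Sj)
            simp only [natDegree_C] at this; omega)
        have e5 : natDegree (derivative Q) ≤ natDegree Q - 1 := natDegree_derivative_le Q
        have e0 : natDegree (lem21S P Q (j+1))
            ≤ natDegree (C ((j:ℂ)+1) * Sj * derivative Q) := by
          rw [hshow, hS', zero_mul, zero_sub, natDegree_neg]
        have e5' : natDegree (derivative Q) + 1 ≤ natDegree Q := by omega
        nlinarith [ih]
    · have hdS : 1 ≤ natDegree Sj := by
        rcases Nat.eq_zero_or_pos (natDegree Sj) with h | h
        · exact absurd (by rw [eq_C_of_natDegree_eq_zero h]; simp) hS'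
        · exact h
      have e1 : natDegree (lem21S P Q (j+1))
          ≤ max (natDegree (derivative Sj * Q)) (natDegree (C ((j:ℂ)+1) * Sj * derivative Q)) := by
        rw [hshow]; exact natDegree_sub_le _ _
      have e2 : natDegree (derivative Sj * Q) ≤ natDegree (derivative Sj) + natDegree Q :=
        natDegree_mul_le
      have e3 : natDegree (derivative Sj) ≤ natDegree Sj - 1 := natDegree_derivative_le Sj
      have e4 : natDegree (C ((j:ℂ)+1) * Sj * derivative Q)
          ≤ natDegree Sj + natDegree (derivative Q) :=
        le_trans natDegree_mul_le (by
          have := natDegree_mul_le (p := C ((j:ℂ)+1)) (q := Sj)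
          simp only [natDegree_C] at this; omega)
      have e3' : natDegree (derivative Sj) + 1 ≤ natDegree Sj := by omega
      by_cases hQ' : derivative Q = 0
      · left
        have e0' : natDegree (lem21S P Q (j+1))
            ≤ natDegree (derivative Sj) + natDegree Q := by
          rw [hshow, hQ', mul_zero, sub_zero]; exact natDegree_mul_le
        nlinarith [ih]
      · have ht : 1 ≤ natDegree Q := by
          rcases Nat.eq_zero_or_pos (natDegree Q) with h | h
          · exact absurd (by rw [eq_C_of_natDegree_eq_zero h]; simp) hQ'
          · exact h
        have e5 : natDegree (derivative Q) ≤ natDegree Q - 1 := natDegree_derivative_le Q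
        have e5' : natDegree (derivative Q) + 1 ≤ natDegree Q := by omega
        left
        have := le_max_iff.mp e1
        rcases this with h | h <;> nlinarith [ih]

open UniqueFactorizationMonoid in
theorem lem21_radical (x : Polynomial ℂ) (hx : x ≠ 0) :
    (radical x).natDegree ≤ x.roots.toFinset.card := by
  have hmem : ∀ q : Polynomial ℂ, q ∈ primeFactors x → q ∈ normalizedFactors x := by
    intro q hq
    exact mem_primeFactors.mp hq
  have hprime : ∀ q ∈ primeFactors x, Prime q := by
    intro q hq
    exact prime_of_normalized_factor q (hmem q hq)
  have hmonic : ∀ q ∈ primeFactors x, q.Monic := by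
    intro q hq
    have h1 : normalize q = q := normalize_normalized_factor q (hmem q hq)
    have := monic_normalize (p := q) (hprime q hq).ne_zero
    rwa [h1] at this
  have hdeg1 : ∀ q ∈ primeFactors x, q.natDegree = 1 := by
    intro q hq
    have := IsAlgClosed.degree_eq_one_of_irreducible ℂ (hprime q hq).irreducible
    exact natDegree_eq_of_degree_eq_some this
  have hform : ∀ q ∈ primeFactors x, q = X + C (q.coeff 0) := by
    intro q hq
    have hd : q.degree ≤ 1 :=
      le_of_eq (IsAlgClosed.degree_eq_one_of_irreducible ℂ (hprime q hq).irreducible)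
    have := eq_X_add_C_of_degree_le_one hd
    have hc1 : q.coeff 1 = 1 := by
      have := hmonic q hq
      have h2 := hdeg1 q hq
      simpa [Monic, leadingCoeff, h2] using this
    rwa [hc1, map_one, one_mul] at this
  have hcard : (radical x).natDegree = (primeFactors x).card := by
    have hrw : radical x = ∏ q ∈ primeFactors x, q := rfl
    rw [hrw, natDegree_prod _ _ (fun q hq => (hprime q hq).ne_zero)]
    rw [Finset.card_eq_sum_ones]
    exact Finset.sum_congr rfl (fun q hq => hdeg1 q hq)
  rw [hcard]
  apply Finset.card_le_card_of_injOn (fun q => -(q.coeff 0))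
  · intro q hq
    have hdvd : q ∣ x := dvd_of_mem_normalizedFactors (hmem q hq)
    rw [Finset.mem_coe, Multiset.mem_toFinset, mem_roots hx]
    obtain ⟨w, hw⟩ := hdvd
    rw [IsRoot, hw, eval_mul]
    rw [hform q hq]
    simp
  · intro q1 h1 q2 h2 heq
    rw [hform q1 h1, hform q2 h2]
    simp only at heq
    rw [neg_inj] at heq
    rw [heq]

set_option maxHeartbeats 1000000 in
theorem lem21_arith (γ δ κ r β s t p k u dG SA SB : ℤ)
    (h1 : SA ≤ r + p + β + u) (h2 : SB ≤ r + dG + β + u)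
    (h3 : SA + r*δ = γ*s) (h4 : SB = γ*t + β*δ)
    (h5 : dG + δ ≤ δ*(r+β)) (h6 : r*(k+p) ≤ s) (h7 : β*(p+1) ≤ t)
    (h8 : 3 ≤ γ) (h9 : 1 ≤ δ) (h10 : δ + κ = γ*k) (h11 : 2*k ≤ κ) (h12 : 1 ≤ k)
    (h13 : u ≤ p) (h14 : 1 ≤ r + β) (hp : 0 ≤ p) (hr : 0 ≤ r) (hβ : 0 ≤ β)
    (hu : 0 ≤ u) : False := by
  have hκ2 : 2 ≤ κ := by linarith
  have hγp : 3*p ≤ γ*p := mul_le_mul_of_nonneg_right h8 hp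
  have e1 : γ*s ≤ r*δ + r + 2*p + β := by linarith
  have e2 : γ*(r*(k+p)) ≤ γ*s := mul_le_mul_of_nonneg_left h6 (by linarith)
  have hid0 : γ*(r*(k+p)) = r*δ + r*(κ + γ*p) := by linear_combination (-r) * h10
  have e3 : r*(κ + γ*p) ≤ r + 2*p + β := by linarith
  rcases le_or_gt β 0 with hβ0 | hβ1
  · have hβe : β = 0 := le_antisymm hβ0 hβ
    have hr1 : 1 ≤ r := by omega
    subst hβe
    have f1 : r*2 ≤ r*κ := mul_le_mul_of_nonneg_left hκ2 hr
    have f2 : r*(3*p) ≤ r*(γ*p) := mul_le_mul_of_nonneg_left hγp hr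
    have f3 : (3*p)*1 ≤ (3*p)*r := mul_le_mul_of_nonneg_left hr1 (by linarith)
    have hid1 : r*(κ + γ*p) = r*κ + r*(γ*p) := by ring
    linarith
  · have hid2 : δ*(r+β) = δ*r + δ*β := by ring
    have e4 : γ*t + β*δ + δ ≤ r + δ*r + δ*β + β + p := by linarith
    have e5 : γ*(β*(p+1)) ≤ γ*t := mul_le_mul_of_nonneg_left h7 (by linarith)
    have i1 : γ*(β*(p+1)) + δ ≤ (1+δ)*r + β + p := by
      have : (1+δ)*r = r + δ*r := by ring
      linarith
    rcases le_or_gt r 0 with hr0 | hr1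
    · have hre : r = 0 := le_antisymm hr0 hr
      subst hre
      have f1 : 3*β ≤ γ*β := mul_le_mul_of_nonneg_right h8 hβ
      have f2 : 3*(β*p) ≤ γ*(β*p) := mul_le_mul_of_nonneg_right h8 (mul_nonneg hβ hp)
      have f3 : p*1 ≤ p*β := mul_le_mul_of_nonneg_left hβ1 hp
      have hid3 : γ*(β*(p+1)) = γ*(β*p) + γ*β := by ring
      linarith
    · set X : ℤ := κ + γ*p - 1 with hX
      have hX1 : 3*p + 1 ≤ X := by simp only [hX]; linarith
      have hX0 : 0 ≤ X := by linarith
      have ii : r*X ≤ 2*p + β := by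
        have hid : r*X = r*(κ+γ*p) - r := by rw [hX]; ring
        linarith [e3]
      have m1 : X*(γ*(β*(p+1)) + δ) ≤ X*((1+δ)*r + β + p) :=
        mul_le_mul_of_nonneg_left i1 hX0
      have m2 : (1+δ)*(r*X) ≤ (1+δ)*(2*p+β) :=
        mul_le_mul_of_nonneg_left ii (by linarith : (0:ℤ) ≤ 1+δ)
      have i2 : X*(γ*(β*(p+1)) + δ) ≤ (1+δ)*(2*p+β) + X*(β+p) := by
        have hid2' : X*((1+δ)*r + β + p) = (1+δ)*(r*X) + X*(β+p) := by ring
        linarith [m1, m2]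
      set W : ℤ := κ*p + (κ - k - 1) + γ*p^2 + (γ-2)*p with hW
      have w1 : X*(γ*p+γ-1) - (1+δ) = γ*W := by
        have hδ : δ = γ*k - κ := by linarith
        rw [hδ, hX, hW]; ring
      have hκk1 : 0 ≤ κ - k - 1 := by linarith
      have hW0 : 0 ≤ W := by
        rw [hW]
        have q1 : 0 ≤ κ*p := mul_nonneg (by linarith) hp
        have q2 : 0 ≤ γ*p^2 := mul_nonneg (by linarith) (sq_nonneg p)
        have q3 : 0 ≤ (γ-2)*p := mul_nonneg (by linarith) hp
        linarith
      have key : (1+δ)*(2*p+β) + X*(β+p) < X*(γ*(β*(p+1)) + δ) := by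
        have expand : X*(γ*(β*(p+1)) + δ) - X*(β+p) - (1+δ)*(2*p+β)
            = β*(X*(γ*p+γ-1) - (1+δ)) + X*(δ-p) - (1+δ)*(2*p) := by ring
        rw [w1] at expand
        have h0γW : 0 ≤ γ*W := mul_nonneg (by linarith) hW0
        have hβγW : 1*(γ*W) ≤ β*(γ*W) := mul_le_mul_of_nonneg_right hβ1 h0γW
        rcases le_or_gt p 0 with hp0 | hp1
        · have hpe : p = 0 := le_antisymm hp0 hp
          subst hpe
          have hXδ : 1*1 ≤ X*δ := mul_le_mul (by linarith) h9 (by linarith) hX0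
          linarith [expand, hXδ, hβγW]
        · have wlb : p*(X+γ-1) ≤ W := by
            have hid3 : p*(X+γ-1) = κ*p + γ*p^2 + (γ-2)*p := by rw [hX]; ring
            linarith
          have t1 : 3*(p*(X+2)) ≤ γ*W := by
            have s1 : p*(X+2) ≤ p*(X+γ-1) :=
              mul_le_mul_of_nonneg_left (by linarith) (by linarith)
            have s2 : 3*(p*(X+γ-1)) ≤ γ*(p*(X+γ-1)) :=
              mul_le_mul_of_nonneg_right h8 (mul_nonneg (by linarith) (by linarith))
            have s3 : γ*(p*(X+γ-1)) ≤ γ*W :=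
              mul_le_mul_of_nonneg_left wlb (by linarith)
            linarith
          have t2 : 0 ≤ (X - 2*p)*(δ - 1) :=
            mul_nonneg (by linarith) (by linarith)
          have hid4 : (X - 2*p)*(δ - 1) = X*δ - X - 2*(p*δ) + 2*p := by ring
          have hid5 : 3*(p*(X+2)) = 3*(p*X) + 6*p := by ring
          have h0pX : 0 ≤ p*X := mul_nonneg (by linarith) hX0
          have final : 0 < β*(γ*W) + X*(δ-p) - (1+δ)*(2*p) := by
            have a2 : 3*(p*X) + 6*p ≤ γ*W := by linarith
            have a3 : 0 ≤ X*δ - X - 2*(p*δ) + 2*p := by linarith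
            have hid6 : X*(δ-p) = X*δ - p*X := by ring
            have hid8 : (1+δ)*(2*p) = 2*p + 2*(p*δ) := by ring
            linarith
          linarith [expand, final]
      linarith [i2, key]

theorem lem21_Sne_const (P : Polynomial ℂ) (hP : P ≠ 0) (c : ℂ) (hc : c ≠ 0) :
    ∀ j, j ≤ P.natDegree →
      lem21S P (C c) j ≠ 0 ∧ (lem21S P (C c) j).natDegree + j = P.natDegree := by
  intro j
  induction j with
  | zero => exact fun _ => ⟨hP, by simp [lem21S]⟩
  | succ j ih =>
    intro hj
    obtain ⟨hne, hdeg⟩ := ih (by omega)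
    set Sj := lem21S P (C c) j with hSj
    have hshow : lem21S P (C c) (j+1) = derivative Sj * C c := by
      show derivative Sj * C c - _ * Sj * derivative (C c) = _
      rw [derivative_C, mul_zero, sub_zero]
    have hd1 : 1 ≤ Sj.natDegree := by omega
    have hS' : derivative Sj ≠ 0 := by
      intro h
      have := natDegree_eq_zero_of_derivative_eq_zero h
      omega
    have hdd : (derivative Sj).natDegree = Sj.natDegree - 1 := by
      apply le_antisymm (natDegree_derivative_le Sj)
      apply le_natDegree_of_ne_zero
      rw [coeff_derivative]
      have h1 : Sj.coeff (Sj.natDegree - 1 + 1) ≠ 0 := by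
        rw [Nat.sub_add_cancel hd1]
        exact leadingCoeff_ne_zero.mpr hne
      have h2 : ((Sj.natDegree - 1 : ℕ) : ℂ) + 1 ≠ 0 := by
        have : ((Sj.natDegree - 1 + 1 : ℕ) : ℂ) ≠ 0 := Nat.cast_ne_zero.mpr (by omega)
        push_cast at this ⊢
        exact this
      exact mul_ne_zero h1 h2
    refine ⟨by rw [hshow]; exact mul_ne_zero hS' (by simpa using hc), ?_⟩
    rw [hshow, natDegree_mul_C hc, hdd]
    omega

set_option maxHeartbeats 2000000 in
/-- **Lemma 2.1.**
Let `k ≥ 1`, `p ≥ 0` be integers and `n 0, …, n k` nonnegative integers with `n 0 ≥ 2` and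
`n 1 + ⋯ + n k ≥ 1`.  Let `α` be a nonzero complex polynomial of degree `p`.  Let `P`, `Q` be
coprime complex polynomials, `Q ≠ 0`, such that `f = P / Q` is nonconstant, every root of `P`
has multiplicity at least `k + p` and every root of `Q` has multiplicity at least `p + 1`.
Then there are two distinct non-poles `z₁ ≠ z₂` at which
`f ^ (n 0) * (f') ^ (n 1) * ⋯ * (f⁽ᵏ⁾) ^ (n k) = α`. -/
theorem differential_monomial_sub_poly_two_zeros_of_rational
    (k p : ℕ) (hk : 1 ≤ k) (n : ℕ → ℕ) (hn0 : 2 ≤ n 0)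
    (hn : 1 ≤ ∑ j ∈ Finset.Icc 1 k, n j)
    (α : Polynomial ℂ) (hα : α ≠ 0) (hαdeg : α.natDegree = p)
    (P Q : Polynomial ℂ) (hQ : Q ≠ 0) (hcop : IsCoprime P Q)
    (f : ℂ → ℂ) (hfdef : f = fun z => P.eval z / Q.eval z)
    (hfnc : ¬ ∃ c : ℂ, ∀ z : ℂ, f z = c)
    (hPz : ∀ z : ℂ, P.IsRoot z → k + p ≤ P.rootMultiplicity z)
    (hQz : ∀ z : ℂ, Q.IsRoot z → p + 1 ≤ Q.rootMultiplicity z) :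
    ∃ z₁ z₂ : ℂ, z₁ ≠ z₂ ∧ Q.eval z₁ ≠ 0 ∧ Q.eval z₂ ≠ 0 ∧
      (∏ j ∈ Finset.range (k + 1), (iteratedDeriv j f z₁) ^ n j) = α.eval z₁ ∧
      (∏ j ∈ Finset.range (k + 1), (iteratedDeriv j f z₂) ^ n j) = α.eval z₂ := by
  by_contra hcon
  have hP0 : P ≠ 0 := by
    rintro rfl
    exact hfnc ⟨0, by simp [hfdef]⟩
  -- notation
  set sA := P.roots.toFinset with hsAdef
  set sB := Q.roots.toFinset with hsBdef
  set γ := ∑ j ∈ Finset.range (k+1), n j with hγdef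
  set δ := ∑ j ∈ Finset.range (k+1), j * n j with hδdef
  set κ := ∑ j ∈ Finset.range (k+1), (k - j) * n j with hκdef
  set s := P.natDegree with hsdef
  set t := Q.natDegree with htdef
  set r := sA.card with hrdef
  set β := sB.card with hβdef
  -- numeric facts about γ δ κ
  have hrange : Finset.range (k+1) = insert 0 (Finset.Icc 1 k) := by
    ext x; simp [Finset.mem_range, Finset.mem_Icc]; omega
  have hγ3 : 3 ≤ γ := by
    rw [hγdef, hrange, Finset.sum_insert (by simp)]
    omega
  have hδ1 : 1 ≤ δ := by
    rw [hδdef, hrange, Finset.sum_insert (by simp)]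
    have h1 : ∑ j ∈ Finset.Icc 1 k, n j ≤ ∑ j ∈ Finset.Icc 1 k, j * n j := by
      apply Finset.sum_le_sum
      intro j hj
      have : 1 ≤ j := (Finset.mem_Icc.mp hj).1
      exact Nat.le_mul_of_pos_left (n j) (by omega)
    omega
  have hγk : δ + κ = γ * k := by
    rw [hγdef, hδdef, hκdef, ← Finset.sum_add_distrib, Finset.sum_mul]
    apply Finset.sum_congr rfl
    intro j hj
    have hjk : j ≤ k := by
      have := Finset.mem_range.mp hj; omega
    rw [← Nat.add_mul, Nat.mul_comm (n j) k]
    congr 1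
    omega
  have hκ2k : 2 * k ≤ κ := by
    have h0 : (k - 0) * n 0 ≤ κ := by
      rw [hκdef]
      exact Finset.single_le_sum (f := fun j => (k-j)*n j) (fun i _ => Nat.zero_le _)
        (Finset.mem_range.mpr (by omega))
    have : 2 * k ≤ k * n 0 := by
      calc 2 * k = k * 2 := by ring
      _ ≤ k * n 0 := Nat.mul_le_mul_left k hn0
    simpa using le_trans this h0
  -- root data
  have hPsplits : Multiset.card P.roots = s := by
    have h := (Polynomial.Splits.natDegree_eq_card_roots (f := P)
      (IsAlgClosed.splits P)).symm
    exact h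
  have hQsplits : Multiset.card Q.roots = t := by
    have h := (Polynomial.Splits.natDegree_eq_card_roots (f := Q)
      (IsAlgClosed.splits Q)).symm
    exact h
  have hmemA : ∀ a ∈ sA, P.IsRoot a := by
    intro a ha
    exact (Polynomial.mem_roots hP0).mp (Multiset.mem_toFinset.mp ha) 
  have hmemB : ∀ b ∈ sB, Q.IsRoot b := by
    intro b hb
    exact (Polynomial.mem_roots hQ).mp (Multiset.mem_toFinset.mp hb) 
  have hm : ∀ a ∈ sA, k + p ≤ P.rootMultiplicity a := fun a ha => hPz a (hmemA a ha)
  have hq1 : ∀ b ∈ sB, p + 1 ≤ Q.rootMultiplicity b := fun b hb => hQz b (hmemB b hb)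
  have hPb : ∀ b ∈ sB, P.eval b ≠ 0 := by
    intro b hb h0
    exact Polynomial.not_isUnit_X_sub_C b
      (hcop.isUnit_of_dvd' (dvd_iff_isRoot.mpr h0) (dvd_iff_isRoot.mpr (hmemB b hb)))
  have hABne : ∀ a ∈ sA, ∀ b ∈ sB, a ≠ b := by
    intro a ha b hb h
    exact hPb b hb (h ▸ hmemA a ha)
  have hsum_s : ∑ a ∈ sA, P.rootMultiplicity a = s := by
    rw [← hPsplits]
    rw [hsAdef]
    rw [← Multiset.toFinset_sum_count_eq P.roots]
    exact Finset.sum_congr rfl (fun a _ => (Polynomial.count_roots P).symm ▸ rfl)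
  have hsum_t : ∑ b ∈ sB, Q.rootMultiplicity b = t := by
    rw [← hQsplits, hsBdef, ← Multiset.toFinset_sum_count_eq Q.roots]
    exact Finset.sum_congr rfl (fun a _ => (Polynomial.count_roots Q).symm ▸ rfl)
  have hs_lb : r * (k + p) ≤ s := by
    rw [← hsum_s]
    have := Finset.card_nsmul_le_sum sA (fun a => P.rootMultiplicity a) (k+p) hm
    simpa [smul_eq_mul] using this
  have ht_lb : β * (p + 1) ≤ t := by
    rw [← hsum_t]
    have := Finset.card_nsmul_le_sum sB (fun b => Q.rootMultiplicity b) (p+1) hq1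
    simpa [smul_eq_mul] using this
  -- nonconstancy: r + β ≥ 1
  have hrβ : 1 ≤ r + β := by
    by_contra h
    have hA : sA = ∅ := Finset.card_eq_zero.mp (by omega)
    have hB : sB = ∅ := Finset.card_eq_zero.mp (by omega)
    have hs0 : s = 0 := by
      rw [← hPsplits]
      have : P.roots = 0 := Multiset.toFinset_eq_empty.mp hA
      simp [this]
    have ht0 : t = 0 := by
      rw [← hQsplits]
      have : Q.roots = 0 := Multiset.toFinset_eq_empty.mp hB
      simp [this]
    have hPCeq : P = C (P.coeff 0) := eq_C_of_natDegree_eq_zero hs0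
    have hQCeq : Q = C (Q.coeff 0) := eq_C_of_natDegree_eq_zero ht0
    refine hfnc ⟨P.coeff 0 / Q.coeff 0, fun z => ?_⟩
    rw [hfdef]
    simp only
    rw [hPCeq, hQCeq]
    simp
  -- factorization of Q
  have hrmA : ∀ a ∈ sA, P.rootMultiplicity a ≤ s := by
    intro a ha
    have hd := pow_rootMultiplicity_dvd P a
    have h2 := natDegree_le_of_dvd hd hP0
    simpa [natDegree_pow, natDegree_X_sub_C] using h2
  have hQfac : Q = C Q.leadingCoeff * ∏ b ∈ sB, (X - C b) ^ (Q.rootMultiplicity b) := by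
    conv_lhs => rw [← C_leadingCoeff_mul_prod_multiset_X_sub_C (p := Q) hQsplits]
    rw [prod_multiset_root_eq_finset_root]
  have hSne : ∀ j, j ≤ k → lem21S P Q j ≠ 0 := by
    intro j hj
    rcases Finset.eq_empty_or_nonempty sB with hB | ⟨b, hb⟩
    · have ht0 : t = 0 := by
        rw [← hQsplits]
        simp [Multiset.toFinset_eq_empty.mp (hsBdef ▸ hB)]
      have hQCeq : Q = C (Q.coeff 0) := eq_C_of_natDegree_eq_zero ht0
      have hc : Q.coeff 0 ≠ 0 := fun h => hQ (by rw [hQCeq, h, map_zero])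
      have hrA : sA.Nonempty := by
        rcases Finset.eq_empty_or_nonempty sA with hA | h
        · exfalso
          have h1 : r = 0 := by rw [hrdef, hA]; simp
          have h2 : β = 0 := by rw [hβdef, hB]; simp
          omega
        · exact h
      obtain ⟨a, ha⟩ := hrA
      have hks : k ≤ s := le_trans (by omega : k ≤ k + p) (le_trans (hm a ha) (hrmA a ha))
      have hres := (lem21_Sne_const P hP0 _ hc j (le_trans hj hks)).1
      rwa [← hQCeq] at hres
    · have hq1b : 1 ≤ Q.rootMultiplicity b := by have := hq1 b hb; omega
      obtain ⟨v, hv, hvb⟩ := lem21_factor Q hQ b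
      obtain ⟨u, hu, hub⟩ := lem21_pole P Q b _ hq1b v hv hvb (hPb b hb) j
      rw [hu]
      exact mul_ne_zero (pow_ne_zero _ (X_sub_C_ne_zero b))
        (fun h => hub (by rw [h]; simp))
  -- cofactor extraction
  have hgex : ∀ j, ∃ gj : Polynomial ℂ, j ≤ k → (lem21S P Q j =
      ((∏ a ∈ sA, (X - C a) ^ (P.rootMultiplicity a - j)) *
       (∏ b ∈ sB, (X - C b) ^ (j * (Q.rootMultiplicity b - 1)))) * gj ∧ gj ≠ 0 ∧
      (∀ b ∈ sB, gj.eval b ≠ 0) ∧ gj.natDegree + j ≤ j * (r + β)) := by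
    intro j
    by_cases hj : j ≤ k
    swap
    · exact ⟨1, fun h => absurd h hj⟩
    set WA := ∏ a ∈ sA, (X - C a) ^ (P.rootMultiplicity a - j) with hWA
    set WB := ∏ b ∈ sB, (X - C b) ^ (j * (Q.rootMultiplicity b - 1)) with hWB
    have hpairA : (↑sA : Set ℂ).Pairwise
        (Function.onFun IsCoprime fun a => (X - C a) ^ (P.rootMultiplicity a - j)) := by
      intro x _ y _ hxy
      exact (Polynomial.pairwise_coprime_X_sub_C Function.injective_id hxy).pow
    have hpairB : (↑sB : Set ℂ).Pairwise
        (Function.onFun IsCoprime fun b => (X - C b) ^ (j * (Q.rootMultiplicity b - 1))) := by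
      intro x _ y _ hxy
      exact (Polynomial.pairwise_coprime_X_sub_C Function.injective_id hxy).pow
    have hWAdvd : WA ∣ lem21S P Q j := by
      apply Finset.prod_dvd_of_coprime hpairA
      intro a ha
      exact lem21_zero P Q a _ (pow_rootMultiplicity_dvd P a) j
        (le_trans (le_trans hj (by omega : k ≤ k + p)) (hm a ha))
    have hWBdvd : WB ∣ lem21S P Q j := by
      apply Finset.prod_dvd_of_coprime hpairB
      intro b hb
      have hq1b : 1 ≤ Q.rootMultiplicity b := by have := hq1 b hb; omega
      obtain ⟨v, hv, hvb⟩ := lem21_factor Q hQ b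
      obtain ⟨u, hu, _⟩ := lem21_pole P Q b _ hq1b v hv hvb (hPb b hb) j
      exact ⟨u, hu⟩
    have hcopW : IsCoprime WA WB := by
      apply IsCoprime.prod_left
      intro a ha
      apply IsCoprime.prod_right
      intro b hb
      exact (Polynomial.pairwise_coprime_X_sub_C Function.injective_id (hABne a ha b hb)).pow
    obtain ⟨gj, hgj⟩ := hcopW.mul_dvd hWAdvd hWBdvd
    have hWA0 : WA ≠ 0 := by
      apply Finset.prod_ne_zero_iff.mpr
      intro a _; exact pow_ne_zero _ (X_sub_C_ne_zero a)
    have hWB0 : WB ≠ 0 := by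
      apply Finset.prod_ne_zero_iff.mpr
      intro b _; exact pow_ne_zero _ (X_sub_C_ne_zero b)
    have hgj0 : gj ≠ 0 := by
      intro h
      exact hSne j hj (by rw [hgj, h, mul_zero])
    refine ⟨gj, fun _ => ⟨hgj, hgj0, ?_, ?_⟩⟩
    · -- eval at poles nonzero
      intro b hb
      have hq1b : 1 ≤ Q.rootMultiplicity b := by have := hq1 b hb; omega
      obtain ⟨v, hv, hvb⟩ := lem21_factor Q hQ b
      obtain ⟨u, hu, hub⟩ := lem21_pole P Q b _ hq1b v hv hvb (hPb b hb) j
      have hsplitB : WB = (X - C b) ^ (j * (Q.rootMultiplicity b - 1)) *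
          ∏ b' ∈ sB.erase b, (X - C b') ^ (j * (Q.rootMultiplicity b' - 1)) := by
        rw [hWB, ← Finset.mul_prod_erase sB _ hb]
      have hcanc : u = WA * (∏ b' ∈ sB.erase b,
          (X - C b') ^ (j * (Q.rootMultiplicity b' - 1))) * gj := by
        apply mul_left_cancel₀
          (pow_ne_zero (j * (Q.rootMultiplicity b - 1)) (X_sub_C_ne_zero b))
        rw [← hu, hgj, hsplitB]
        ring
      intro h0
      apply hub
      rw [hcanc]
      simp [h0]
    · -- degree bound
      have hSdeg : (lem21S P Q j).natDegree + j ≤ s + j * t := by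
        rcases lem21_deg P Q j with h | h
        · exact h
        · exact absurd h (hSne j hj)
      have hWAdeg : WA.natDegree = ∑ a ∈ sA, (P.rootMultiplicity a - j) := by
        rw [hWA, natDegree_prod _ _ (fun a _ => pow_ne_zero _ (X_sub_C_ne_zero a))]
        apply Finset.sum_congr rfl
        intro a _
        rw [natDegree_pow, natDegree_X_sub_C, mul_one]
      have hWBdeg : WB.natDegree = ∑ b ∈ sB, j * (Q.rootMultiplicity b - 1) := by
        rw [hWB, natDegree_prod _ _ (fun b _ => pow_ne_zero _ (X_sub_C_ne_zero b))]
        apply Finset.sum_congr rfl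
        intro b _
        rw [natDegree_pow, natDegree_X_sub_C, mul_one]
      have hWAsum : WA.natDegree + j * r = s := by
        have h1 : ∑ a ∈ sA, (P.rootMultiplicity a - j) + ∑ _a ∈ sA, j
            = ∑ a ∈ sA, P.rootMultiplicity a := by
          rw [← Finset.sum_add_distrib]
          apply Finset.sum_congr rfl
          intro a ha
          have : j ≤ P.rootMultiplicity a :=
            le_trans (le_trans hj (by omega : k ≤ k + p)) (hm a ha)
          omega
        have h2 : ∑ _a ∈ sA, j = r * j := by
          rw [Finset.sum_const, smul_eq_mul, hrdef]
        rw [hWAdeg, ← hsum_s]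
        rw [h2] at h1
        linarith [h1]
      have hWBsum : WB.natDegree + j * β = j * t := by
        have h1 : ∑ b ∈ sB, (j * (Q.rootMultiplicity b - 1)) + ∑ _b ∈ sB, j
            = ∑ b ∈ sB, j * Q.rootMultiplicity b := by
          rw [← Finset.sum_add_distrib]
          apply Finset.sum_congr rfl
          intro b hb
          have h3 : 1 ≤ Q.rootMultiplicity b := by have := hq1 b hb; omega
          have h5 : j * (Q.rootMultiplicity b - 1) + j * 1 = j * Q.rootMultiplicity b := by
            rw [← Nat.mul_add]
            congr 1
            omega
          omega
        have h2 : ∑ _b ∈ sB, j = β * j := by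
          rw [Finset.sum_const, smul_eq_mul, hβdef]
        have h4 : ∑ b ∈ sB, j * Q.rootMultiplicity b = j * t := by
          rw [← hsum_t, Finset.mul_sum]
        rw [hWBdeg]
        rw [h2] at h1
        linarith [h1, h4]
      have hmuldeg : (lem21S P Q j).natDegree
          = WA.natDegree + WB.natDegree + gj.natDegree := by
        rw [hgj, natDegree_mul (mul_ne_zero hWA0 hWB0) hgj0, natDegree_mul hWA0 hWB0]
      have hfin : gj.natDegree + j ≤ j * r + j * β := by linarith
      have : j * (r + β) = j * r + j * β := by ring
      omega
  choose g hg using hgex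

  -- main polynomial objects
  set G := ∏ j ∈ Finset.range (k+1), (g j) ^ (n j) with hGdef
  set PA := ∏ a ∈ sA, (X - C a) ^ (γ * P.rootMultiplicity a - δ) with hPAdef
  set PB := ∏ b ∈ sB, (X - C b) ^ (δ * (Q.rootMultiplicity b - 1)) with hPBdef
  set DEN := ∏ b ∈ sB, (X - C b) ^ (γ * Q.rootMultiplicity b + δ) with hDENdef
  set c0 := Q.leadingCoeff ^ (γ + δ) with hc0def
  set NUM := PA * G with hNUMdef
  set H := NUM - C c0 * α * DEN with hHdef
  have hc00 : c0 ≠ 0 := pow_ne_zero _ (leadingCoeff_ne_zero.mpr hQ)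
  have hmemrange : ∀ j ∈ Finset.range (k+1), j ≤ k := by
    intro j hj
    have := Finset.mem_range.mp hj
    omega
  have hmk : ∀ a ∈ sA, ∀ j ∈ Finset.range (k+1), j ≤ P.rootMultiplicity a := by
    intro a ha j hj
    exact le_trans (le_trans (hmemrange j hj) (by omega : k ≤ k + p)) (hm a ha)
  -- numerator identity
  have hNid : (∏ j ∈ Finset.range (k+1), (lem21S P Q j) ^ (n j)) = PA * PB * G := by
    have step1 : (∏ j ∈ Finset.range (k+1), (lem21S P Q j) ^ (n j))
        = (∏ j ∈ Finset.range (k+1),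
            (∏ a ∈ sA, (X - C a) ^ (P.rootMultiplicity a - j)) ^ (n j)) *
          (∏ j ∈ Finset.range (k+1),
            (∏ b ∈ sB, (X - C b) ^ (j * (Q.rootMultiplicity b - 1))) ^ (n j)) *
          G := by
      rw [hGdef, ← Finset.prod_mul_distrib, ← Finset.prod_mul_distrib]
      apply Finset.prod_congr rfl
      intro j hj
      rw [(hg j (hmemrange j hj)).1]
      rw [mul_pow, mul_pow]
    rw [step1]
    congr 1
    congr 1
    · -- PA part
      rw [hPAdef]
      have swap : (∏ j ∈ Finset.range (k+1),
          (∏ a ∈ sA, (X - C a) ^ (P.rootMultiplicity a - j)) ^ (n j))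
          = ∏ a ∈ sA, ∏ j ∈ Finset.range (k+1),
              (X - C a) ^ ((P.rootMultiplicity a - j) * (n j)) := by
        rw [Finset.prod_comm]
        apply Finset.prod_congr rfl
        intro j _
        rw [← Finset.prod_pow]
        apply Finset.prod_congr rfl
        intro a _
        rw [← pow_mul]
      rw [swap]
      apply Finset.prod_congr rfl
      intro a ha
      rw [Finset.prod_pow_eq_pow_sum]
      congr 1
      have hterm : ∀ j ∈ Finset.range (k+1),
          (P.rootMultiplicity a - j) * n j + j * n j = P.rootMultiplicity a * n j := by
        intro j hj
        have := hmk a ha j hj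
        rw [← Nat.add_mul]
        congr 1
        omega
      have hsum2 : (∑ j ∈ Finset.range (k+1), (P.rootMultiplicity a - j) * n j) + δ
          = γ * P.rootMultiplicity a := by
        rw [hδdef, ← Finset.sum_add_distrib]
        rw [Finset.sum_congr rfl hterm]
        rw [hγdef, Finset.sum_mul]
        apply Finset.sum_congr rfl
        intro j _
        ring
      omega
    · -- PB part
      rw [hPBdef]
      have swap : (∏ j ∈ Finset.range (k+1),
          (∏ b ∈ sB, (X - C b) ^ (j * (Q.rootMultiplicity b - 1))) ^ (n j))
          = ∏ b ∈ sB, ∏ j ∈ Finset.range (k+1),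
              (X - C b) ^ ((j * (Q.rootMultiplicity b - 1)) * (n j)) := by
        rw [Finset.prod_comm]
        apply Finset.prod_congr rfl
        intro j _
        rw [← Finset.prod_pow]
        apply Finset.prod_congr rfl
        intro b _
        rw [← pow_mul]
      rw [swap]
      apply Finset.prod_congr rfl
      intro b _
      rw [Finset.prod_pow_eq_pow_sum]
      congr 1
      rw [hδdef, Finset.sum_mul]
      apply Finset.sum_congr rfl
      intro j _
      ring
  -- denominator identity
  have hQpow : Q ^ (γ + δ) = C c0 * (PB * DEN) := by
    have base : Q ^ (γ + δ) = C (Q.leadingCoeff ^ (γ + δ)) *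
        ∏ b ∈ sB, (X - C b) ^ (Q.rootMultiplicity b * (γ + δ)) := by
      conv_lhs => rw [hQfac]
      rw [mul_pow, ← map_pow, ← Finset.prod_pow]
      congr 1
      apply Finset.prod_congr rfl
      intro b _
      rw [← pow_mul]
    rw [base, ← hc0def]
    congr 1
    rw [hPBdef, hDENdef, ← Finset.prod_mul_distrib]
    apply Finset.prod_congr rfl
    intro b hb
    rw [← pow_add]
    congr 1
    obtain ⟨qq, hqq⟩ : ∃ qq, Q.rootMultiplicity b = qq + 1 :=
      ⟨Q.rootMultiplicity b - 1, by have := hq1 b hb; omega⟩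
    rw [hqq]
    simp only [Nat.add_sub_cancel]
    ring
  -- eval identity
  have hzBne : ∀ z : ℂ, Q.eval z ≠ 0 → ∀ b ∈ sB, z - b ≠ 0 := by
    intro z hz b hb h
    have : z = b := by linear_combination h
    exact hz (this ▸ hmemB b hb)
  have hDENz : ∀ z : ℂ, Q.eval z ≠ 0 → DEN.eval z ≠ 0 := by
    intro z hz
    rw [hDENdef, eval_prod]
    apply Finset.prod_ne_zero_iff.mpr
    intro b hb
    simp only [eval_pow, eval_sub, eval_X, eval_C]
    exact pow_ne_zero _ (hzBne z hz b hb)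
  have hPBz : ∀ z : ℂ, Q.eval z ≠ 0 → PB.eval z ≠ 0 := by
    intro z hz
    rw [hPBdef, eval_prod]
    apply Finset.prod_ne_zero_iff.mpr
    intro b hb
    simp only [eval_pow, eval_sub, eval_X, eval_C]
    exact pow_ne_zero _ (hzBne z hz b hb)
  have hsumΓ : ∑ j ∈ Finset.range (k+1), (j+1) * n j = γ + δ := by
    rw [hγdef, hδdef, ← Finset.sum_add_distrib]
    rw [Nat.add_comm]  -- maybe wrong; fix below
    apply Finset.sum_congr rfl
    intro j _
    ring
  have hMval : ∀ z : ℂ, Q.eval z ≠ 0 →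
      (∏ j ∈ Finset.range (k+1), (iteratedDeriv j f z) ^ n j) - α.eval z
        = H.eval z / (c0 * DEN.eval z) := by
    intro z hz
    have hstep : (∏ j ∈ Finset.range (k+1), (iteratedDeriv j f z) ^ n j)
        = (∏ j ∈ Finset.range (k+1), ((lem21S P Q j).eval z) ^ n j)
          / (Q.eval z) ^ (γ + δ) := by
      have h1 : ∀ j ∈ Finset.range (k+1), (iteratedDeriv j f z) ^ n j
          = (((lem21S P Q j).eval z) / (Q.eval z) ^ (j+1)) ^ n j := by
        intro j _
        congr 1
        rw [hfdef]
        exact lem21S_eval P Q j hz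
      rw [Finset.prod_congr rfl h1]
      simp only [div_pow]
      rw [Finset.prod_div_distrib]
      congr 1
      have h2 : ∀ j ∈ Finset.range (k+1), ((Q.eval z) ^ (j+1)) ^ n j
          = (Q.eval z) ^ ((j+1) * n j) := by
        intro j _
        rw [← pow_mul]
      rw [Finset.prod_congr rfl h2, Finset.prod_pow_eq_pow_sum, hsumΓ]
    rw [hstep]
    have hnum : (∏ j ∈ Finset.range (k+1), ((lem21S P Q j).eval z) ^ n j)
        = PA.eval z * PB.eval z * G.eval z := by
      have := congrArg (eval z) hNid
      simpa [eval_prod, eval_pow, eval_mul] using this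
    have hden : (Q.eval z) ^ (γ + δ) = c0 * (PB.eval z * DEN.eval z) := by
      have := congrArg (eval z) hQpow
      simpa [eval_pow, eval_mul, eval_C] using this
    rw [hnum, hden]
    have hPBz' := hPBz z hz
    have hDENz' := hDENz z hz
    rw [hHdef, hNUMdef]
    simp only [eval_sub, eval_mul, eval_C]
    field_simp
  -- nonvanishing of H at poles
  have hGb : ∀ b ∈ sB, G.eval b ≠ 0 := by
    intro b hb
    rw [hGdef, eval_prod]
    apply Finset.prod_ne_zero_iff.mpr
    intro j hj
    rw [eval_pow]
    exact pow_ne_zero _ ((hg j (hmemrange j hj)).2.2.1 b hb)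
  have hPAb : ∀ b ∈ sB, PA.eval b ≠ 0 := by
    intro b hb
    rw [hPAdef, eval_prod]
    apply Finset.prod_ne_zero_iff.mpr
    intro a ha
    rw [eval_pow]
    apply pow_ne_zero
    simp only [eval_sub, eval_X, eval_C]
    intro h
    exact (hABne a ha b hb) (by linear_combination -h)
  have hDENb : ∀ b ∈ sB, DEN.eval b = 0 := by
    intro b hb
    rw [hDENdef, eval_prod]
    apply Finset.prod_eq_zero hb
    simp only [eval_pow, eval_sub, eval_X, eval_C, sub_self]
    exact zero_pow (by omega)
  have hHb : ∀ b ∈ sB, H.eval b ≠ 0 := by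
    intro b hb
    rw [hHdef, hNUMdef]
    simp only [eval_sub, eval_mul, eval_C, hDENb b hb, mul_zero, sub_zero]
    exact mul_ne_zero (hPAb b hb) (hGb b hb)
  have hPA0 : PA ≠ 0 := by
    rw [hPAdef]
    apply Finset.prod_ne_zero_iff.mpr
    intro a _; exact pow_ne_zero _ (X_sub_C_ne_zero a)
  have hG0 : G ≠ 0 := by
    rw [hGdef]
    apply Finset.prod_ne_zero_iff.mpr
    intro j hj; exact pow_ne_zero _ (hg j (hmemrange j hj)).2.1
  have hNUM0 : NUM ≠ 0 := mul_ne_zero hPA0 hG0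
  have hDEN0 : DEN ≠ 0 := by
    rw [hDENdef]
    apply Finset.prod_ne_zero_iff.mpr
    intro b _; exact pow_ne_zero _ (X_sub_C_ne_zero b)
  have hBpoly0 : C c0 * α * DEN ≠ 0 :=
    mul_ne_zero (mul_ne_zero (by simpa using hc00) hα) hDEN0
  -- degree bookkeeping
  have hdGsum : G.natDegree + δ ≤ δ * (r + β) := by
    have h1 : G.natDegree = ∑ j ∈ Finset.range (k+1), n j * (g j).natDegree := by
      rw [hGdef, natDegree_prod _ _ (fun j hj => pow_ne_zero _ (hg j (hmemrange j hj)).2.1)]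
      apply Finset.sum_congr rfl
      intro j _
      rw [natDegree_pow]
    have h2 : ∀ j ∈ Finset.range (k+1),
        n j * (g j).natDegree + j * n j ≤ (j * n j) * (r + β) := by
      intro j hj
      have h3 := (hg j (hmemrange j hj)).2.2.2
      calc n j * (g j).natDegree + j * n j = n j * ((g j).natDegree + j) := by ring
      _ ≤ n j * (j * (r + β)) := Nat.mul_le_mul_left _ h3
      _ = (j * n j) * (r + β) := by ring
    have h4 : (∑ j ∈ Finset.range (k+1), n j * (g j).natDegree) + δ
        ≤ ∑ j ∈ Finset.range (k+1), (j * n j) * (r + β) := by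
      rw [hδdef, ← Finset.sum_add_distrib]
      exact Finset.sum_le_sum h2
    rw [h1, ← Finset.sum_mul] at *
    exact le_trans h4 (le_of_eq (by rw [hδdef]))
  have hSA' : PA.natDegree + r * δ = γ * s := by
    have h1 : PA.natDegree = ∑ a ∈ sA, (γ * P.rootMultiplicity a - δ) := by
      rw [hPAdef, natDegree_prod _ _ (fun a _ => pow_ne_zero _ (X_sub_C_ne_zero a))]
      apply Finset.sum_congr rfl
      intro a _
      rw [natDegree_pow, natDegree_X_sub_C, mul_one]
    have h2 : ∀ a ∈ sA, (γ * P.rootMultiplicity a - δ) + δ = γ * P.rootMultiplicity a := by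
      intro a ha
      have h3 : γ * k ≤ γ * P.rootMultiplicity a :=
        Nat.mul_le_mul_left γ (le_trans (by omega : k ≤ k + p) (hm a ha))
      have h4 : δ ≤ γ * P.rootMultiplicity a := by omega
      omega
    have h5 : (∑ a ∈ sA, (γ * P.rootMultiplicity a - δ)) + ∑ _a ∈ sA, δ
        = ∑ a ∈ sA, γ * P.rootMultiplicity a := by
      rw [← Finset.sum_add_distrib]
      exact Finset.sum_congr rfl h2
    have h6 : ∑ _a ∈ sA, δ = r * δ := by rw [Finset.sum_const, smul_eq_mul, hrdef]
    have h7 : ∑ a ∈ sA, γ * P.rootMultiplicity a = γ * s := by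
      rw [← hsum_s, Finset.mul_sum]
    rw [h1]
    rw [h6] at h5
    linarith [h5, h7]
  have hSB' : DEN.natDegree = γ * t + β * δ := by
    have h1 : DEN.natDegree = ∑ b ∈ sB, (γ * Q.rootMultiplicity b + δ) := by
      rw [hDENdef, natDegree_prod _ _ (fun b _ => pow_ne_zero _ (X_sub_C_ne_zero b))]
      apply Finset.sum_congr rfl
      intro b _
      rw [natDegree_pow, natDegree_X_sub_C, mul_one]
    rw [h1, Finset.sum_add_distrib, Finset.sum_const, smul_eq_mul, ← Finset.mul_sum, hsum_t,
      hβdef]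
  -- H ≠ 0
  have hγmstrong : ∀ a ∈ sA, p + 2 ≤ γ * P.rootMultiplicity a - δ := by
    intro a ha
    have hγm : γ * (k + p) ≤ γ * P.rootMultiplicity a := Nat.mul_le_mul_left γ (hm a ha)
    have hexpand : γ * (k+p) = γ*k + γ*p := by ring
    have hγp : p ≤ γ * p := Nat.le_mul_of_pos_left p (by omega)
    omega
  have hH0 : H ≠ 0 := by
    rcases Finset.eq_empty_or_nonempty sB with hBem | ⟨b, hb⟩
    · have hβ0 : β = 0 := by rw [hβdef, hBem]; simp
      have hr1 : 1 ≤ r := by omega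
      obtain ⟨a, ha⟩ := Finset.card_pos.mp (by omega : 0 < sA.card)
      intro h0
      have hDEN1 : DEN = 1 := by rw [hDENdef, hBem, Finset.prod_empty]
      have hNUMeq : NUM = C c0 * α := by
        rw [hHdef] at h0
        have h1 := sub_eq_zero.mp (by rw [← h0])
        rwa [hDEN1, mul_one] at h1
      have hdegNUM : γ * P.rootMultiplicity a - δ ≤ NUM.natDegree := by
        rw [hNUMdef, natDegree_mul hPA0 hG0]
        have h1 : PA.natDegree = ∑ a' ∈ sA, (γ * P.rootMultiplicity a' - δ) := by
          rw [hPAdef, natDegree_prod _ _ (fun a' _ => pow_ne_zero _ (X_sub_C_ne_zero a'))]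
          apply Finset.sum_congr rfl
          intro a' _
          rw [natDegree_pow, natDegree_X_sub_C, mul_one]
        have h2 : γ * P.rootMultiplicity a - δ ≤ PA.natDegree := by
          rw [h1]
          exact Finset.single_le_sum (f := fun a' => γ * P.rootMultiplicity a' - δ)
            (fun _ _ => Nat.zero_le _) ha
        omega
      have hdegB : (C c0 * α).natDegree = p := by
        rw [natDegree_mul (by simpa using hc00) hα, natDegree_C, hαdeg]
        omega
      rw [hNUMeq, hdegB] at hdegNUM
      have := hγmstrong a ha
      omega
    · exact fun h0 => hHb b hb (by rw [h0]; simp)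
  -- all roots of H coincide
  have hzuniq : ∀ z w : ℂ, H.eval z = 0 → H.eval w = 0 → z = w := by
    have hQne : ∀ z : ℂ, H.eval z = 0 → Q.eval z ≠ 0 := by
      intro z hz0 h
      refine hHb z ?_ hz0
      rw [hsBdef]
      exact Multiset.mem_toFinset.mpr ((Polynomial.mem_roots hQ).mpr h)
    have hval : ∀ z : ℂ, H.eval z = 0 →
        (∏ j ∈ Finset.range (k+1), (iteratedDeriv j f z) ^ n j) = α.eval z := by
      intro z hz0
      have h1 := hMval z (hQne z hz0)
      rw [hz0, zero_div] at h1
      linear_combination h1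
    intro z w hz0 hw0
    by_contra hzw
    exact hcon ⟨z, w, hzw, hQne z hz0, hQne w hw0, hval z hz0, hval w hw0⟩
  -- H is a scaled power of (X - z0)
  have hHsplit : Multiset.card H.roots = H.natDegree := by
    have h := (Polynomial.Splits.natDegree_eq_card_roots (f := H)
      (IsAlgClosed.splits H)).symm
    exact h
  obtain ⟨z0, l, hHform, hlroot⟩ : ∃ z0 l, H = C H.leadingCoeff * (X - C z0) ^ l
      ∧ (1 ≤ l → H.eval z0 = 0) := by
    rcases Multiset.empty_or_exists_mem H.roots with hem | ⟨z0, hz0⟩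
    · refine ⟨0, 0, ?_, by omega⟩
      rw [pow_zero, mul_one]
      have hd0 : H.natDegree = 0 := by rw [← hHsplit, hem]; simp
      conv_lhs => rw [eq_C_of_natDegree_eq_zero hd0]
      congr 1
      rw [leadingCoeff, hd0]
    · have hfact := C_leadingCoeff_mul_prod_multiset_X_sub_C (p := H) hHsplit
      have hrep : H.roots = Multiset.replicate (Multiset.card H.roots) z0 := by
        apply Multiset.eq_replicate.mpr ⟨rfl, ?_⟩
        intro b hb
        exact hzuniq b z0 ((Polynomial.mem_roots hH0).mp hb)
          ((Polynomial.mem_roots hH0).mp hz0)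
      rw [hrep, Multiset.map_replicate, Multiset.prod_replicate] at hfact
      refine ⟨z0, Multiset.card H.roots, hfact.symm, fun _ => ?_⟩
      exact (Polynomial.mem_roots hH0).mp hz0
  have hlc0 : H.leadingCoeff ≠ 0 := leadingCoeff_ne_zero.mpr hH0
  -- Mason–Stothers setup
  set B := C c0 * α * DEN with hBdef2
  set D := gcd NUM B with hDdef
  have hD0 : D ≠ 0 := by
    rw [hDdef]
    intro h
    exact hNUM0 ((gcd_eq_zero_iff NUM B).mp h).1
  have hDdvdA : D ∣ NUM := gcd_dvd_left NUM B
  have hDdvdB : D ∣ B := gcd_dvd_right NUM B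
  have hDdvdH : D ∣ H := by rw [hHdef]; exact dvd_sub hDdvdA hDdvdB
  have hDdvdpow : D ∣ (X - C z0) ^ l := by
    have h1 : D ∣ C H.leadingCoeff * (X - C z0) ^ l := hHform ▸ hDdvdH
    exact (isUnit_C.mpr hlc0.isUnit).dvd_mul_left.mp h1
  obtain ⟨u, hul, hassoc⟩ := (dvd_prime_pow (prime_X_sub_C z0) l).mp hDdvdpow
  set A1 := NUM / D with hA1def
  set B1 := B / D with hB1def
  have hA1 : NUM = D * A1 := (EuclideanDomain.mul_div_cancel' hD0 hDdvdA).symm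
  have hB1 : B = D * B1 := (EuclideanDomain.mul_div_cancel' hD0 hDdvdB).symm
  have hcop1 : IsCoprime A1 B1 := isCoprime_div_gcd_div_gcd hBpoly0
  set C1 := A1 - B1 with hC1def
  have hDC1 : D * C1 = H := by rw [hC1def, mul_sub, ← hA1, ← hB1, hHdef]
  have hC10 : C1 ≠ 0 := by
    intro h
    rw [h, mul_zero] at hDC1
    exact hH0 hDC1.symm
  have hA10 : A1 ≠ 0 := by
    intro h
    rw [h, mul_zero] at hA1
    exact hNUM0 hA1
  have hB10 : B1 ≠ 0 := by
    intro h
    rw [h, mul_zero] at hB1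
    exact hBpoly0 hB1
  -- degrees
  have hDdeg : D.natDegree = u := by
    obtain ⟨w, hw⟩ := hassoc
    have h1 : (D * ↑w).natDegree = u := by
      rw [hw, natDegree_pow, natDegree_X_sub_C, mul_one]
    rw [natDegree_mul hD0 (Units.ne_zero w), natDegree_eq_zero_of_isUnit w.isUnit] at h1
    omega
  have hdegA : NUM.natDegree = PA.natDegree + G.natDegree := natDegree_mul hPA0 hG0
  have hdegB : B.natDegree = p + DEN.natDegree := by
    rw [hBdef2, natDegree_mul (mul_ne_zero (by simpa using hc00) hα) hDEN0,
      natDegree_mul (by simpa using hc00) hα, natDegree_C, hαdeg]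
    omega
  have hdegA1 : A1.natDegree + u = NUM.natDegree := by
    have := natDegree_mul hD0 hA10
    rw [← hA1, hDdeg] at this
    omega
  have hdegB1 : B1.natDegree + u = B.natDegree := by
    have := natDegree_mul hD0 hB10
    rw [← hB1, hDdeg] at this
    omega
  -- u ≤ p
  have hup : u ≤ p := by
    rcases Nat.eq_zero_or_pos l with hl0 | hl1
    · omega
    · have hz0root : H.eval z0 = 0 := hlroot hl1
      have hQz0 : Q.eval z0 ≠ 0 := by
        intro h
        exact hHb z0 (Multiset.mem_toFinset.mpr ((Polynomial.mem_roots hQ).mpr h)) hz0root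
      have hDENz0 : DEN.eval z0 ≠ 0 := hDENz z0 hQz0
      have hpowdvdB : (X - C z0) ^ u ∣ B := dvd_trans hassoc.symm.dvd hDdvdB
      have hu1 : u ≤ rootMultiplicity z0 B := (le_rootMultiplicity_iff hBpoly0).mpr hpowdvdB
      have hrm1 : rootMultiplicity z0 B
          = rootMultiplicity z0 (C c0 * α) + rootMultiplicity z0 DEN := by
        rw [hBdef2]
        exact Polynomial.rootMultiplicity_mul (by rw [← hBdef2]; exact hBpoly0)
      have hrm2 : rootMultiplicity z0 (C c0 * α)
          = rootMultiplicity z0 (C c0) + rootMultiplicity z0 α :=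
        Polynomial.rootMultiplicity_mul (mul_ne_zero (by simpa using hc00) hα)
      have hrm3 : rootMultiplicity z0 (C c0) = 0 :=
        Polynomial.rootMultiplicity_eq_zero (by simp [IsRoot, hc00])
      have hrm4 : rootMultiplicity z0 DEN = 0 :=
        Polynomial.rootMultiplicity_eq_zero hDENz0
      have hrm5 : rootMultiplicity z0 α ≤ p := by
        have hd := pow_rootMultiplicity_dvd α z0
        have h2 := natDegree_le_of_dvd hd hα
        rw [natDegree_pow, natDegree_X_sub_C, mul_one, hαdeg] at h2
        exact h2
      omega
  -- roots cardinality bounds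
  have hcardA : NUM.roots.toFinset.card ≤ r + G.natDegree := by
    have hsub : NUM.roots.toFinset ⊆ sA ∪ G.roots.toFinset := by
      intro x hx
      have hx' : NUM.eval x = 0 :=
        (Polynomial.mem_roots hNUM0).mp (Multiset.mem_toFinset.mp hx)
      rw [hNUMdef, eval_mul] at hx'
      rcases mul_eq_zero.mp hx' with h | h
      · rw [hPAdef, eval_prod] at h
        obtain ⟨a, ha, hpow⟩ := Finset.prod_eq_zero_iff.mp h
        simp only [eval_pow, eval_sub, eval_X, eval_C] at hpow
        have hx0 := (pow_eq_zero_iff'.mp hpow).1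
        have hxa : x = a := by linear_combination hx0
        exact Finset.mem_union_left _ (hxa ▸ ha)
      · apply Finset.mem_union_right
        exact Multiset.mem_toFinset.mpr ((Polynomial.mem_roots hG0).mpr h)
    calc NUM.roots.toFinset.card ≤ (sA ∪ G.roots.toFinset).card := Finset.card_le_card hsub
    _ ≤ sA.card + G.roots.toFinset.card := Finset.card_union_le _ _
    _ ≤ r + G.natDegree := by
        have h1 : G.roots.toFinset.card ≤ Multiset.card G.roots :=
          Multiset.toFinset_card_le _
        have h2 := Polynomial.card_roots' G
        omega
  have hcardB : B.roots.toFinset.card ≤ p + β := by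
    have hsub : B.roots.toFinset ⊆ α.roots.toFinset ∪ sB := by
      intro x hx
      have hx' : B.eval x = 0 :=
        (Polynomial.mem_roots hBpoly0).mp (Multiset.mem_toFinset.mp hx)
      rw [hBdef2, eval_mul, eval_mul, eval_C] at hx'
      rcases mul_eq_zero.mp hx' with h | h
      · rcases mul_eq_zero.mp h with h' | h'
        · exact absurd h' hc00
        · exact Finset.mem_union_left _
            (Multiset.mem_toFinset.mpr ((Polynomial.mem_roots hα).mpr h'))
      · apply Finset.mem_union_right
        rw [hDENdef, eval_prod] at h
        obtain ⟨b, hb, hpow⟩ := Finset.prod_eq_zero_iff.mp h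
        simp only [eval_pow, eval_sub, eval_X, eval_C] at hpow
        have hx0 := (pow_eq_zero_iff'.mp hpow).1
        have hxb : x = b := by linear_combination hx0
        exact hxb ▸ hb
    calc B.roots.toFinset.card ≤ (α.roots.toFinset ∪ sB).card := Finset.card_le_card hsub
    _ ≤ α.roots.toFinset.card + sB.card := Finset.card_union_le _ _
    _ ≤ p + β := by
        have h1 : α.roots.toFinset.card ≤ Multiset.card α.roots :=
          Multiset.toFinset_card_le _
        have h2 := Polynomial.card_roots' α
        omega
  have hcardC : C1.roots.toFinset.card ≤ 1 := by
    have hsub : C1.roots.toFinset ⊆ {z0} := by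
      intro x hx
      have hx' : C1.eval x = 0 :=
        (Polynomial.mem_roots hC10).mp (Multiset.mem_toFinset.mp hx)
      have hHx : H.eval x = 0 := by
        rw [← hDC1, eval_mul, hx', mul_zero]
      rw [hHform] at hHx
      simp only [eval_mul, eval_pow, eval_sub, eval_X, eval_C] at hHx
      rcases mul_eq_zero.mp hHx with h | h
      · exact absurd (by simpa using h) hlc0
      · have hx0 := (pow_eq_zero_iff'.mp h).1
        have hxz : x = z0 := by linear_combination hx0
        simp [hxz]
    calc C1.roots.toFinset.card ≤ ({z0} : Finset ℂ).card := Finset.card_le_card hsub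
    _ = 1 := by simp
  -- apply Mason–Stothers
  have hab : IsCoprime A1 (-B1) := hcop1.neg_right
  have hbc : IsCoprime (-B1) (-C1) := by
    have h1 : IsCoprime B1 (A1 + B1 * (-1)) := hcop1.symm.add_mul_left_right (-1)
    have h2 : A1 + B1 * (-1) = C1 := by rw [hC1def]; ring
    rw [h2] at h1
    exact h1.neg_left.neg_right
  have hca : IsCoprime (-C1) A1 := by
    have h1 : IsCoprime (B1 + -1 * A1) A1 := hcop1.symm.add_mul_right_left (-1)
    have h2 : B1 + -1 * A1 = -C1 := by rw [hC1def]; ring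
    rwa [h2] at h1
  have hsum0 : A1 + (-B1) + (-C1) = 0 := by rw [hC1def]; ring
  rcases Polynomial.abc hA10 (neg_ne_zero.mpr hB10) (neg_ne_zero.mpr hC10)
    hab hsum0 with ⟨habc1, habc2, _⟩ | ⟨hda, hdb, _⟩
  swap
  · -- degenerate case
    have hA1d : A1.natDegree = 0 := natDegree_eq_zero_of_derivative_eq_zero hda
    have hB1d : B1.natDegree = 0 := by
      apply natDegree_eq_zero_of_derivative_eq_zero
      have : derivative (-B1) = - derivative B1 := by simp
      rw [this] at hdb
      exact neg_eq_zero.mp hdb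
    rcases Nat.eq_zero_or_pos r with hr0 | hr1
    · -- β ≥ 1
      have hβ1 : 1 ≤ β := by omega
      have hSBbig : γ + δ ≤ DEN.natDegree := by
        rw [hSB']
        have h1 : γ ≤ γ * t := Nat.le_mul_of_pos_right γ (by
          have := ht_lb
          by_contra h
          push_neg at h
          interval_cases t
          · have : β * (p+1) = 0 := by omega
            have : β = 0 := by
              rcases Nat.mul_eq_zero.mp this with h | h
              · exact h
              · omega
            omega)
        have h2 : δ ≤ β * δ := Nat.le_mul_of_pos_left δ hβ1
        omega
      omega
    · -- r ≥ 1
      obtain ⟨a, ha⟩ := Finset.card_pos.mp (by omega : 0 < sA.card)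
      have h1 : γ * P.rootMultiplicity a - δ ≤ PA.natDegree := by
        have hPAd : PA.natDegree = ∑ a' ∈ sA, (γ * P.rootMultiplicity a' - δ) := by
          rw [hPAdef, natDegree_prod _ _ (fun a' _ => pow_ne_zero _ (X_sub_C_ne_zero a'))]
          apply Finset.sum_congr rfl
          intro a' _
          rw [natDegree_pow, natDegree_X_sub_C, mul_one]
        rw [hPAd]
        exact Finset.single_le_sum (f := fun a' => γ * P.rootMultiplicity a' - δ)
          (fun _ _ => Nat.zero_le _) ha
      have h2 := hγmstrong a ha
      omega
  · -- main case: extract the two inequalities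
    have hprodswap : A1 * -B1 * -C1 = A1 * B1 * C1 := by ring
    rw [hprodswap] at habc1 habc2
    have hABC0 : A1 * B1 * C1 ≠ 0 := mul_ne_zero (mul_ne_zero hA10 hB10) hC10
    have hradbound := lem21_radical _ hABC0
    have hrootsbound : (A1 * B1 * C1).roots.toFinset.card
        ≤ (r + G.natDegree) + (p + β) + 1 := by
      have hAB0 : A1 * B1 ≠ 0 := mul_ne_zero hA10 hB10
      have hrmul : (A1 * B1 * C1).roots = A1.roots + B1.roots + C1.roots := by
        rw [Polynomial.roots_mul hABC0, Polynomial.roots_mul hAB0]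
      have hsubA1 : A1.roots.toFinset ⊆ NUM.roots.toFinset := by
        intro x hx
        apply Multiset.mem_toFinset.mpr
        apply (Polynomial.mem_roots hNUM0).mpr
        have hx0 : A1.eval x = 0 := (Polynomial.mem_roots hA10).mp (Multiset.mem_toFinset.mp hx)
        show NUM.eval x = 0
        rw [hA1, eval_mul, hx0, mul_zero]
      have hsubB1 : B1.roots.toFinset ⊆ B.roots.toFinset := by
        intro x hx
        apply Multiset.mem_toFinset.mpr
        apply (Polynomial.mem_roots hBpoly0).mpr
        have hx0 : B1.eval x = 0 := (Polynomial.mem_roots hB10).mp (Multiset.mem_toFinset.mp hx)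
        show B.eval x = 0
        rw [hB1, eval_mul, hx0, mul_zero]
      calc (A1 * B1 * C1).roots.toFinset.card
          ≤ A1.roots.toFinset.card + B1.roots.toFinset.card + C1.roots.toFinset.card := by
            rw [hrmul, Multiset.toFinset_add, Multiset.toFinset_add]
            calc ((A1.roots.toFinset ∪ B1.roots.toFinset) ∪ C1.roots.toFinset).card
                ≤ (A1.roots.toFinset ∪ B1.roots.toFinset).card + C1.roots.toFinset.card :=
                  Finset.card_union_le _ _
              _ ≤ A1.roots.toFinset.card + B1.roots.toFinset.card + C1.roots.toFinset.card := by
                  have := Finset.card_union_le A1.roots.toFinset B1.roots.toFinset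
                  omega
        _ ≤ NUM.roots.toFinset.card + B.roots.toFinset.card + C1.roots.toFinset.card := by
            have h1 := Finset.card_le_card hsubA1
            have h2 := Finset.card_le_card hsubB1
            omega
        _ ≤ (r + G.natDegree) + (p + β) + 1 := by
            have := hcardA
            have := hcardB
            have := hcardC
            omega
    have hI1 : PA.natDegree ≤ r + p + β + u := by
      have h1 : A1.natDegree + 1 ≤ (r + G.natDegree) + (p + β) + 1 :=
        le_trans habc1 (le_trans hradbound hrootsbound)
      omega
    have hI2 : DEN.natDegree ≤ r + G.natDegree + β + u := by
      have h0 : (-B1).natDegree = B1.natDegree := natDegree_neg B1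
      have h1 : B1.natDegree + 1 ≤ (r + G.natDegree) + (p + β) + 1 := by
        rw [← h0]
        exact le_trans habc2 (le_trans hradbound hrootsbound)
      omega
    -- final arithmetic contradiction (in ℤ)
    exact lem21_arith (γ : ℤ) (δ : ℤ) (κ : ℤ) (r : ℤ) (β : ℤ) (s : ℤ) (t : ℤ) (p : ℤ)
      (k : ℤ) (u : ℤ) (G.natDegree : ℤ) (PA.natDegree : ℤ) (DEN.natDegree : ℤ)
      (by exact_mod_cast hI1) (by exact_mod_cast hI2)
      (by exact_mod_cast hSA') (by exact_mod_cast hSB')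
      (by exact_mod_cast hdGsum) (by exact_mod_cast hs_lb) (by exact_mod_cast ht_lb)
      (by exact_mod_cast hγ3) (by exact_mod_cast hδ1) (by exact_mod_cast hγk)
      (by exact_mod_cast hκ2k) (by exact_mod_cast hk) (by exact_mod_cast hup)
      (by exact_mod_cast hrβ) (by positivity) (Int.natCast_nonneg _) (Int.natCast_nonneg _)
      (by positivity)
end

section
/- Let A ≠ 0 and b be complex numbers and l ≥ 1 an integer, and let f(z) = A (z − b)^{−l} for z ≠ b. Let k ≥ 1 be an integer and n_0, n_1, …, n_k nonnegative integers with n_0 ≥ 1 and n_1 + ⋯ + n_k ≥ 1; set γ_M = ∑_{j=0}^k n_j and Γ_M = ∑_{j=0}^k (j+1) n_j. Then there exists a nonzero complex constant C such that for all z ≠ b, ∏_{j=0}^{k} (f^{(j)}(z))^{n_j} = C (z − b)^{−((l − 1)γ_M + Γ_M)}; consequently, since (l − 1)γ_M + Γ_M ≥ 2, for every complex number h ≠ 0 the equation ∏_{j=0}^{k} (f^{(j)}(z))^{n_j} = h has at least two distinct solutions z ∈ ℂ \ {b}. -/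
open Finset

private lemma zpow_finset_sum (x : ℂ) (hx : x ≠ 0) (s : Finset ℕ) (e : ℕ → ℤ) :
    ∏ j ∈ s, x ^ e j = x ^ (∑ j ∈ s, e j) := by
  induction s using Finset.cons_induction with
  | empty => simp
  | cons a s ha ih => rw [Finset.prod_cons, Finset.sum_cons, zpow_add₀ hx, ih]

private lemma iterDeriv_single_pole (A b : ℂ) (l : ℕ) :
    ∀ (j : ℕ) (z : ℂ), z ≠ b →
      iteratedDeriv j (fun z => A * (z - b) ^ (-(l : ℤ))) z =
        A * (∏ i ∈ Finset.range j, (-((l : ℤ) + i) : ℂ)) * (z - b) ^ (-((l : ℤ) + j)) := by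
  intro j
  induction j with
  | zero => intro z hz; simp
  | succ j ih =>
    intro z hz
    have hzb : z - b ≠ 0 := sub_ne_zero.mpr hz
    rw [iteratedDeriv_succ]
    have hopen : IsOpen {w : ℂ | w ≠ b} := isOpen_ne
    have hev : iteratedDeriv j (fun z => A * (z - b) ^ (-(l : ℤ))) =ᶠ[nhds z]
        (fun w => A * (∏ i ∈ Finset.range j, (-((l : ℤ) + i) : ℂ)) *
          (w - b) ^ (-((l : ℤ) + j))) := by
      filter_upwards [hopen.mem_nhds hz] with w hw using ih w hw
    rw [hev.deriv_eq]
    set c : ℂ := A * (∏ i ∈ Finset.range j, (-((l : ℤ) + i) : ℂ)) with hc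
    set e : ℤ := -((l : ℤ) + j) with he
    have hd : HasDerivAt (fun w : ℂ => c * (w - b) ^ e)
        (c * ((e : ℂ) * (z - b) ^ (e - 1))) z := by
      have h1 : HasDerivAt (fun w : ℂ => w - b) 1 z := (hasDerivAt_id z).sub_const b
      have h2 := (hasDerivAt_zpow e (z - b) (Or.inl hzb)).comp z h1
      simpa [Function.comp_def, mul_assoc] using h2.const_mul c
    rw [hd.deriv, Finset.prod_range_succ]
    have hexp2 : e - 1 = -((l : ℤ) + (j + 1 : ℕ)) := by rw [he]; push_cast; ring
    rw [hexp2, hc, he]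
    push_cast
    ring

/-- **Differential monomials of a rational function with a single pole**
(Subcase II of Case I in the proof of Theorem 1.2).
Let `f z = A (z - b)^{-l}` with `A ≠ 0` and `l ≥ 1`, let `k ≥ 1` and `n 0, …, n k` be
nonnegative integers with `n 0 ≥ 1` and `n 1 + ⋯ + n k ≥ 1`, and put
`γ_M = ∑ n j`, `Γ_M = ∑ (j+1) n j`.  Then `M[f] = ∏_{j=0}^{k} (f⁽ʲ⁾)^(n j)` equals
`C (z - b)^{-((l-1)γ_M + Γ_M)}` on `ℂ \ {b}` for some constant `C ≠ 0`; consequently, since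
`(l-1)γ_M + Γ_M ≥ 2`, for every `h ≠ 0` the equation `M[f] z = h` has at least two distinct
solutions `z ∈ ℂ \ {b}`. -/
theorem differential_monomial_of_single_pole
    (A b : ℂ) (hA : A ≠ 0) (l : ℕ) (hl : 1 ≤ l)
    (f : ℂ → ℂ) (hfdef : f = fun z => A * (z - b) ^ (-(l : ℤ)))
    (k : ℕ) (hk : 1 ≤ k) (n : ℕ → ℕ) (hn0 : 1 ≤ n 0)
    (hn : 1 ≤ ∑ j ∈ Finset.Icc 1 k, n j) :
    (∃ C : ℂ, C ≠ 0 ∧ ∀ z : ℂ, z ≠ b →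
      ∏ j ∈ Finset.range (k + 1), (iteratedDeriv j f z) ^ n j =
        C * (z - b) ^ (-(((l - 1) * (∑ j ∈ Finset.range (k + 1), n j) +
            ∑ j ∈ Finset.range (k + 1), (j + 1) * n j : ℕ) : ℤ))) ∧
    2 ≤ (l - 1) * (∑ j ∈ Finset.range (k + 1), n j) +
        ∑ j ∈ Finset.range (k + 1), (j + 1) * n j ∧
    ∀ h : ℂ, h ≠ 0 → ∃ z₁ z₂ : ℂ, z₁ ≠ z₂ ∧ z₁ ≠ b ∧ z₂ ≠ b ∧
      ∏ j ∈ Finset.range (k + 1), (iteratedDeriv j f z₁) ^ n j = h ∧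
      ∏ j ∈ Finset.range (k + 1), (iteratedDeriv j f z₂) ^ n j = h := by
  set m : ℕ := (l - 1) * (∑ j ∈ Finset.range (k + 1), n j) +
      ∑ j ∈ Finset.range (k + 1), (j + 1) * n j with hm
  set C : ℂ := ∏ j ∈ Finset.range (k + 1),
      (A * ∏ i ∈ Finset.range j, (-((l : ℤ) + i) : ℂ)) ^ n j with hC
  have hCne : C ≠ 0 := by
    apply Finset.prod_ne_zero_iff.mpr
    intro j _
    apply pow_ne_zero
    apply mul_ne_zero hA
    apply Finset.prod_ne_zero_iff.mpr
    intro i _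
    have h0 : (0 : ℤ) < (l : ℤ) + i := by positivity
    simp only [ne_eq, neg_eq_zero]
    exact_mod_cast h0.ne'
  -- exponent identity
  have hexp : ∑ j ∈ Finset.range (k + 1), (-((l : ℤ) + j)) * (n j : ℤ) = -(m : ℤ) := by
    have hcast : ((l - 1 : ℕ) : ℤ) = (l : ℤ) - 1 := by omega
    rw [hm]
    push_cast [hcast]
    rw [Finset.mul_sum, ← Finset.sum_add_distrib, ← Finset.sum_neg_distrib]
    apply Finset.sum_congr rfl
    intro j _
    ring
  -- the main formula
  have hmain : ∀ z : ℂ, z ≠ b →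
      ∏ j ∈ Finset.range (k + 1), (iteratedDeriv j f z) ^ n j = C * (z - b) ^ (-(m : ℤ)) := by
    intro z hz
    have hzb : z - b ≠ 0 := sub_ne_zero.mpr hz
    have hterm : ∀ j ∈ Finset.range (k + 1), (iteratedDeriv j f z) ^ n j =
        (A * ∏ i ∈ Finset.range j, (-((l : ℤ) + i) : ℂ)) ^ n j *
          (z - b) ^ ((-((l : ℤ) + j)) * (n j : ℤ)) := by
      intro j _
      rw [hfdef, iterDeriv_single_pole A b l j z hz, mul_pow, zpow_mul, zpow_natCast]
    rw [Finset.prod_congr rfl hterm, Finset.prod_mul_distrib,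
      zpow_finset_sum _ hzb, hexp]
  -- lower bound on m
  have hsum : ∑ j ∈ Finset.Icc 1 k, n j = ∑ i ∈ Finset.range k, n (1 + i) := by
    rw [show Finset.Icc 1 k = Finset.Ico 1 (k + 1) by rfl, Finset.sum_Ico_eq_sum_range]
    simp
  have hm2 : 2 ≤ m := by
    have hΓ : ∑ j ∈ Finset.range (k + 1), (j + 1) * n j =
        (∑ i ∈ Finset.range k, ((i + 1) + 1) * n (i + 1)) + 1 * n 0 :=
      Finset.sum_range_succ' (fun j => (j + 1) * n j) k
    have h1 : ∑ i ∈ Finset.range k, n (1 + i) ≤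
        ∑ i ∈ Finset.range k, ((i + 1) + 1) * n (i + 1) := by
      apply Finset.sum_le_sum
      intro i _
      rw [add_comm 1 i]
      nlinarith [Nat.zero_le (n (i + 1))]
    have : 2 ≤ ∑ j ∈ Finset.range (k + 1), (j + 1) * n j := by
      rw [hΓ, one_mul]
      omega
    omega
  refine ⟨⟨C, hCne, hmain⟩, hm2, ?_⟩
  -- solutions
  intro h hh
  obtain ⟨r, hr⟩ := IsAlgClosed.exists_pow_nat_eq (C / h) (by omega : 0 < m)
  have hCh : C / h ≠ 0 := div_ne_zero hCne hh
  have hr0 : r ≠ 0 := by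
    intro h0; rw [h0] at hr; simp [zero_pow (by omega : m ≠ 0)] at hr; exact hCh hr.symm
  set ζ : ℂ := Complex.exp (2 * Real.pi * Complex.I / m) with hζ
  have hζprim : IsPrimitiveRoot ζ m := Complex.isPrimitiveRoot_exp m (by omega)
  have hζm : ζ ^ m = 1 := hζprim.pow_eq_one
  have hζ1 : ζ ≠ 1 := hζprim.ne_one (by omega)
  have hζ0 : ζ ≠ 0 := by
    intro h0; rw [h0, zero_pow (by omega : m ≠ 0)] at hζm; exact one_ne_zero hζm.symm
  refine ⟨b + r, b + ζ * r, ?_, ?_, ?_, ?_, ?_⟩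
  · intro he
    have : ζ * r = r := by linear_combination -he
    exact hζ1 (by field_simp at this; exact this)
  · simpa using hr0
  · simpa using mul_ne_zero hζ0 hr0
  · rw [hmain _ (by simpa using hr0)]
    have : (b + r - b) = r := by ring
    rw [this, zpow_neg, zpow_natCast, hr]
    field_simp
  · rw [hmain _ (by simpa using mul_ne_zero hζ0 hr0)]
    have he : (b + ζ * r - b) = ζ * r := by ring
    rw [he, zpow_neg, zpow_natCast, mul_pow, hζm, one_mul, hr]
    field_simp
end
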